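/- arXiv:1002.3099 — 9 statements merged into one kernel-verified Lean document; each statement's English description precedes it below -/
import Mathlib

section
/- Let g be a finite-dimensional real Lie algebra with center ξ, endowed with a complex structure J (an ℝ-linear map J : g → g with J∘J = −id satisfying the integrability condition [X,Y] − [JX,JY] + J[JX,Y] + J[X,JY] = 0 for all X,Y). If Jξ ∩ [g,g] ≠ {0}, then (g,J) admits no Hermitian-symplectic structure, i.e. there is no alternating bilinear form Ω : g × g → ℝ satisfying Ω([X,Y],Z) + Ω([Y,Z],X) + Ω([Z,X],Y) = 0 for all X,Y,Z ∈ g and Ω(X,JX) > 0 for every nonzero X ∈ g. -/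
/-- If `g` is a finite-dimensional real Lie algebra with a complex structure `J`
such that `J ξ ∩ [g,g] ≠ {0}` (where `ξ` is the center), then `(g, J)` admits no
Hermitian-symplectic structure. -/
theorem no_hermitian_symplectic_of_center_condition
    {g : Type*} [LieRing g] [LieAlgebra ℝ g] [FiniteDimensional ℝ g]
    (J : g →ₗ[ℝ] g)
    (hJ2 : ∀ X : g, J (J X) = -X)
    (hJint : ∀ X Y : g, ⁅X, Y⁆ - ⁅J X, J Y⁆ + J ⁅J X, Y⁆ + J ⁅X, J Y⁆ = 0)
    (hcenter : ∃ W : g, W ≠ 0 ∧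
        (∃ X : g, (∀ Y : g, ⁅X, Y⁆ = 0) ∧ J X = W) ∧
        W ∈ Submodule.span ℝ {Z : g | ∃ A B : g, ⁅A, B⁆ = Z}) :
    ¬ ∃ Ω : g →ₗ[ℝ] g →ₗ[ℝ] ℝ,
        (∀ X Y : g, Ω X Y = - Ω Y X) ∧
        (∀ X Y Z : g, Ω ⁅X, Y⁆ Z + Ω ⁅Y, Z⁆ X + Ω ⁅Z, X⁆ Y = 0) ∧
        (∀ X : g, X ≠ 0 → 0 < Ω X (J X)) := by
  rintro ⟨Ω, hskew, hclosed, htame⟩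
  obtain ⟨W, hW0, ⟨X, hXcen, hJX⟩, hWspan⟩ := hcenter
  -- X ≠ 0
  have hX0 : X ≠ 0 := by
    rintro rfl
    apply hW0
    rw [← hJX, map_zero]
  -- Ω W X = 0 since W is in the span of commutators and Ω ⁅A,B⁆ X = 0
  have hker : Submodule.span ℝ {Z : g | ∃ A B : g, ⁅A, B⁆ = Z} ≤
      LinearMap.ker (Ω.flip X) := by
    rw [Submodule.span_le]
    rintro Z ⟨A, B, rfl⟩
    have h := hclosed A B X
    have hBX : ⁅B, X⁆ = (0:g) := by rw [← lie_skew, hXcen, neg_zero]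
    simp only [hBX, hXcen A, map_zero, LinearMap.zero_apply, add_zero] at h
    simpa [LinearMap.mem_ker] using h
  have hWX : Ω W X = 0 := hker hWspan
  have : Ω X (J X) = 0 := by
    rw [hskew X (J X), hJX, hWX, neg_zero]
  exact absurd this (ne_of_gt (htame X hX0))
end

section
/- Let g be a real Lie algebra with a complex structure J and a J-compatible inner product ⟨·,·⟩, let c be the associated Bismut torsion 3-form and dc its Chevalley–Eilenberg differential. If X belongs to the center ξ of g, then for every Y ∈ g: dc(X, Y, JX, JY) = 2( ‖[Y,JX]‖² − ⟨[[JX,Y],JX], Y⟩ − ⟨[[Y,JY],JX], X⟩ ), where ‖Z‖² = ⟨Z,Z⟩. -/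
/-- The Bismut torsion 3-form of a complex structure `J` and a `J`-compatible inner
product `B` on a Lie algebra: `c(X,Y,Z) = −⟨[JX,JY],Z⟩ − ⟨[JY,JZ],X⟩ − ⟨[JZ,JX],Y⟩`. -/
def bismutC {g R : Type*} [LieRing g] [Ring R] (B : g → g → R) (J : g → g)
    (X Y Z : g) : R :=
  - B ⁅J X, J Y⁆ Z - B ⁅J Y, J Z⁆ X - B ⁅J Z, J X⁆ Y

/-- The Chevalley–Eilenberg differential of a 3-form `c` on a Lie algebra. -/
def dC {g R : Type*} [LieRing g] [Ring R] (c : g → g → g → R) (X Y Z W : g) : R :=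
  - c ⁅X, Y⁆ Z W + c ⁅X, Z⁆ Y W - c ⁅X, W⁆ Y Z
    - c ⁅Y, Z⁆ X W + c ⁅Y, W⁆ X Z - c ⁅Z, W⁆ X Y

/-- for `X` in the center of `g`,
`dc(X, Y, JX, JY) = 2(‖[Y,JX]‖² − ⟨[[JX,Y],JX],Y⟩ − ⟨[[Y,JY],JX],X⟩)`. -/
theorem dc_center_formula
    {g : Type*} [LieRing g] [LieAlgebra ℝ g] [FiniteDimensional ℝ g]
    (J : g →ₗ[ℝ] g)
    (hJ2 : ∀ X : g, J (J X) = -X)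
    (hJint : ∀ X Y : g, ⁅X, Y⁆ - ⁅J X, J Y⁆ + J ⁅J X, Y⁆ + J ⁅X, J Y⁆ = 0)
    (B : g →ₗ[ℝ] g →ₗ[ℝ] ℝ)
    (hsymm : ∀ X Y : g, B X Y = B Y X)
    (hpos : ∀ X : g, X ≠ 0 → 0 < B X X)
    (hcompat : ∀ X Y : g, B (J X) (J Y) = B X Y)
    (X : g) (hX : ∀ Y : g, ⁅X, Y⁆ = 0) :
    ∀ Y : g,
      dC (bismutC (fun a b => B a b) J) X Y (J X) (J Y) =
        2 * (B ⁅Y, J X⁆ ⁅Y, J X⁆ - B ⁅⁅J X, Y⁆, J X⁆ Y - B ⁅⁅Y, J Y⁆, J X⁆ X) := by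
  intro Y
  have hc : ∀ Z : g, ⁅J X, J Z⁆ = J ⁅J X, Z⁆ := by
    intro Z
    have h := hJint X Z
    rw [hX, hX, map_zero, zero_sub, add_zero, neg_add_eq_zero] at h
    exact h
  have hc2 : ∀ Z : g, ⁅J Z, J X⁆ = J ⁅Z, J X⁆ := by
    intro Z
    calc ⁅J Z, J X⁆ = -⁅J X, J Z⁆ := (lie_skew _ _).symm
      _ = J (-⁅J X, Z⁆) := by rw [hc, map_neg]
      _ = J ⁅Z, J X⁆ := by rw [lie_skew]
  have hXl : ∀ Z : g, ⁅Z, X⁆ = 0 := fun Z => by rw [← lie_skew, hX, neg_zero]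
  simp only [dC, bismutC, hX, hXl, hc, hJ2, map_zero, lie_zero, zero_lie, map_neg,
    lie_neg, neg_lie, neg_neg, LinearMap.map_neg, LinearMap.neg_apply, hcompat,
    LinearMap.zero_apply]
  have ha : (B ⁅J ⁅Y, J X⁆, J X⁆) (J Y) = -(B ⁅⁅J X, Y⁆, J X⁆) Y := by
    rw [hc2, hcompat, ← lie_skew (J X) Y, neg_lie, map_neg, LinearMap.neg_apply, neg_neg]
  have hb : (B ⁅J X, Y⁆) ⁅Y, J X⁆ = -(B ⁅Y, J X⁆) ⁅Y, J X⁆ := by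
    rw [← lie_skew (J X) Y, map_neg, LinearMap.neg_apply]
  have hd : (B ⁅J ⁅Y, J Y⁆, J X⁆) (J X) = (B ⁅⁅Y, J Y⁆, J X⁆) X := by
    rw [hc2, hcompat]
  have hf : (B ⁅J X, Y⁆) ⁅J X, Y⁆ = (B ⁅Y, J X⁆) ⁅Y, J X⁆ := by
    rw [← lie_skew (J X) Y]; simp only [map_neg, LinearMap.neg_apply, neg_neg]
  have hcg : (B ⁅Y, J ⁅Y, J X⁆⁆) X + (B ⁅J Y, ⁅J X, Y⁆⁆) X
      = (B ⁅⁅Y, J Y⁆, J X⁆) X := by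
    have e1 : J ⁅Y, J X⁆ = -⁅J X, J Y⁆ := by
      rw [← lie_skew Y (J X), map_neg, hc]
    have key : (⁅⁅Y, J Y⁆, J X⁆ : g) = ⁅Y, J ⁅Y, J X⁆⁆ + ⁅J Y, ⁅J X, Y⁆⁆ := by
      rw [e1, lie_neg, leibniz_lie Y (J X) (J Y), ← lie_skew (J X) ⁅Y, J Y⁆,
        ← lie_skew (J X) Y, lie_neg, ← lie_skew ⁅Y, J X⁆ (J Y)]
      abel
    rw [key, map_add, LinearMap.add_apply]
  linarith [ha, hb, hd, hf, hcg]
end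

section
/- Let g be a finite-dimensional nilpotent real Lie algebra endowed with a complex structure J. If the center ξ of g is not J-invariant (i.e. Jξ ⊄ ξ), then for every J-compatible inner product ⟨·,·⟩ on g the Bismut torsion 3-form c is not closed, i.e. dc ≠ 0; in other words (g,J) admits no SKT inner product. -/
/-- if the center of a nilpotent Lie algebra with complex structure `J` is not
`J`-invariant, then no `J`-compatible inner product is SKT. -/
theorem no_SKT_of_center_not_J_invariant
    {g : Type*} [LieRing g] [LieAlgebra ℝ g] [FiniteDimensional ℝ g]
    [LieRing.IsNilpotent g]
    (J : g →ₗ[ℝ] g)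
    (hJ2 : ∀ X : g, J (J X) = -X)
    (hJint : ∀ X Y : g, ⁅X, Y⁆ - ⁅J X, J Y⁆ + J ⁅J X, Y⁆ + J ⁅X, J Y⁆ = 0)
    (hcenter : ∃ X : g, (∀ Y : g, ⁅X, Y⁆ = 0) ∧ ∃ Y : g, ⁅J X, Y⁆ ≠ 0) :
    ∀ B : g →ₗ[ℝ] g →ₗ[ℝ] ℝ,
      (∀ X Y : g, B X Y = B Y X) →
      (∀ X : g, X ≠ 0 → 0 < B X X) →
      (∀ X Y : g, B (J X) (J Y) = B X Y) →
      ∃ X Y Z W : g, dC (bismutC (fun a b => B a b) J) X Y Z W ≠ 0 := by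
  intro B _hsym hpos hBJ
  by_contra hcon
  push_neg at hcon
  obtain ⟨Z, hZ, Y₀, hY₀⟩ := hcenter
  set W : g := J Z with hW
  -- ⋆ : ad_W commutes with J
  have hstar : ∀ y : g, ⁅W, J y⁆ = J ⁅W, y⁆ := by
    intro y
    have h1 := hJint Z y
    rw [hZ y, hZ (J y), map_zero, zero_sub, add_zero] at h1
    exact neg_add_eq_zero.mp h1
  have hZW : ⁅W, Z⁆ = 0 := by
    rw [← lie_skew, hZ W, neg_zero]
  -- key computational lemma
  have key : ∀ x : g, (∀ y : g, ⁅W, ⁅x, y⁆⁆ = 0) → ⁅W, x⁆ = 0 := by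
    intro x hx
    set u : g := ⁅W, x⁆ with hu
    have hxW : ⁅x, W⁆ = -u := by rw [hu, ← lie_skew]
    have hu2 : ⁅W, u⁆ = 0 := by
      have h2 : ⁅W, ⁅x, W⁆⁆ = 0 := hx W
      rw [hxW, lie_neg, neg_eq_zero] at h2
      exact h2
    have hswap : ∀ y : g, ⁅u, y⁆ = -⁅x, ⁅W, y⁆⁆ := by
      intro y
      have h3 := leibniz_lie W x y
      rw [hx y] at h3
      have h4 : ⁅u, y⁆ + ⁅x, ⁅W, y⁆⁆ = 0 := by rw [hu]; exact h3.symm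
      exact eq_neg_of_add_eq_zero_left h4
    -- bracket values
    have bJxW : ⁅J x, W⁆ = -(J u) := by
      rw [← lie_skew, hstar x, hu]
    have bWJW : ⁅W, J W⁆ = 0 := by
      rw [hW, hJ2 Z, lie_neg, ← hW, hZW, neg_zero]
    have bJWv : ∀ v : g, ⁅J W, v⁆ = 0 := by
      intro v
      rw [hW, hJ2 Z, neg_lie, hZ v, neg_zero]
    -- the three c-values
    have hc4 : bismutC (fun a b => B a b) J ⁅x, J x⁆ Z W = 0 := by
      have e1 : ⁅J ⁅x, J x⁆, J Z⁆ = 0 := by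
        rw [← hW, ← lie_skew, hstar ⁅x, J x⁆, hx (J x), map_zero, neg_zero]
      have e2 : ⁅J Z, J W⁆ = 0 := by rw [← hW]; exact bWJW
      have e3 : ⁅J W, J ⁅x, J x⁆⁆ = 0 := bJWv _
      simp [bismutC, e1, e2, e3]
    have hc5 : bismutC (fun a b => B a b) J u Z (J x) = B u u - B ⁅J u, x⁆ Z := by
      have e1 : ⁅J u, J Z⁆ = 0 := by
        rw [← hW, ← lie_skew, hstar u, hu2, map_zero, neg_zero]
      have e2 : ⁅J Z, J (J x)⁆ = -u := by
        rw [← hW, hJ2 x, lie_neg, hu]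
      have e3 : ⁅J (J x), J u⁆ = ⁅J u, x⁆ := by
        rw [hJ2 x, neg_lie, lie_skew]
      simp only [bismutC, e1, e2, e3, map_zero, LinearMap.zero_apply, map_neg,
        LinearMap.neg_apply]
      ring
    have hc6 : bismutC (fun a b => B a b) J (J u) Z x = -(B u u) - B ⁅J u, x⁆ Z := by
      have e1 : ⁅J (J u), J Z⁆ = 0 := by
        rw [hJ2 u, neg_lie, ← hW, ← lie_skew, hu2, neg_zero, neg_zero]
      have e2 : ⁅J Z, J x⁆ = J u := by
        rw [← hW, hstar x, hu]
      have e3 : ⁅J x, J (J u)⁆ = ⁅J u, x⁆ := by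
        have h5 : ⁅J x, u⁆ = ⁅x, J u⁆ := by
          have h6 := hswap (J x)
          rw [hstar x, ← hu] at h6
          rw [← lie_skew, h6, neg_neg]
        rw [hJ2 u, lie_neg, h5, ← lie_skew x (J u), neg_neg]
      have hJuJu : B (J u) (J u) = B u u := hBJ u u
      simp only [bismutC, e1, e2, e3, map_zero, LinearMap.zero_apply, map_neg,
        LinearMap.neg_apply, hJuJu]
      ring
    -- assemble dC
    have hcalc : dC (bismutC (fun a b => B a b) J) Z x (J x) W = -(2 * B u u) := by
      have c0 : ∀ a b : g, bismutC (fun a b => B a b) J 0 a b = 0 := by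
        intro a b; simp [bismutC]
      have cneg : ∀ a b d : g,
          bismutC (fun a b => B a b) J (-a) b d = -bismutC (fun a b => B a b) J a b d := by
        intro a b d
        simp only [bismutC, map_neg, neg_lie, lie_neg, LinearMap.neg_apply]
        ring
      have t1 : ⁅Z, x⁆ = 0 := hZ x
      have t2 : ⁅Z, J x⁆ = 0 := hZ (J x)
      have t3 : ⁅Z, W⁆ = 0 := hZ W
      rw [dC, t1, t2, t3, hxW, bJxW, c0, c0, c0, cneg, cneg, hc4, hc5, hc6]
      ring
    have h0 := hcon Z x (J x) W
    rw [hcalc] at h0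
    by_contra hne
    have := hpos u hne
    linarith
  -- downward induction along the lower central series
  obtain ⟨k, hk⟩ := LieModule.IsNilpotent.nilpotent ℝ g g
  have main : ∀ d : ℕ, ∀ x : g, x ∈ LieModule.lowerCentralSeries ℝ g g (k - d) → ⁅W, x⁆ = 0 := by
    intro d
    induction d with
    | zero =>
      intro x hx
      rw [Nat.sub_zero, hk, LieSubmodule.mem_bot] at hx
      rw [hx, lie_zero]
    | succ d ih =>
      intro x hx
      apply key
      intro y
      apply ih
      have h1 : ⁅y, x⁆ ∈ LieModule.lowerCentralSeries ℝ g g (k - (d + 1) + 1) := by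
        rw [LieModule.lowerCentralSeries_succ]
        exact LieSubmodule.lie_mem_lie (LieSubmodule.mem_top y) hx
      have h2 : LieModule.lowerCentralSeries ℝ g g (k - (d + 1) + 1) ≤ LieModule.lowerCentralSeries ℝ g g (k - d) :=
        LieModule.antitone_lowerCentralSeries ℝ g g (by omega)
      have h3 : ⁅y, x⁆ ∈ LieModule.lowerCentralSeries ℝ g g (k - d) := h2 h1
      have h4 : ⁅x, y⁆ = -⁅y, x⁆ := by rw [lie_skew]
      rw [h4]
      exact neg_mem h3
  have hfin : ⁅W, Y₀⁆ = 0 := by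
    apply main k
    rw [Nat.sub_self, LieModule.lowerCentralSeries_zero]
    exact LieSubmodule.mem_top Y₀
  exact hY₀ hfin
end

section
/- Let g be a finite-dimensional real Lie algebra with a complex structure J, and let Ω be a Hermitian-symplectic structure on (g,J). Define g_Ω(X,Y) = ½( Ω(X,JY) + Ω(Y,JX) ). Then g_Ω is a symmetric positive-definite bilinear form on g satisfying g_Ω(JX,JY) = g_Ω(X,Y) for all X,Y, and the Bismut torsion 3-form c of (J, g_Ω) is closed, i.e. dc = 0; thus g_Ω is a J-compatible SKT inner product on (g,J). -/
set_option maxHeartbeats 0 in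
/-- if `Ω` is a Hermitian-symplectic structure on `(g, J)`, then
`g_Ω(X,Y) = ½(Ω(X,JY) + Ω(Y,JX))` is a symmetric, positive-definite, `J`-compatible
bilinear form whose Bismut torsion 3-form is closed, i.e. `g_Ω` is a `J`-compatible SKT
inner product on `(g, J)`. -/
theorem hermitian_symplectic_gives_SKT
    {g : Type*} [LieRing g] [LieAlgebra ℝ g] [FiniteDimensional ℝ g]
    (J : g →ₗ[ℝ] g)
    (hJ2 : ∀ X : g, J (J X) = -X)
    (hJint : ∀ X Y : g, ⁅X, Y⁆ - ⁅J X, J Y⁆ + J ⁅J X, Y⁆ + J ⁅X, J Y⁆ = 0)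
    (Ω : g →ₗ[ℝ] g →ₗ[ℝ] ℝ)
    (halt : ∀ X Y : g, Ω X Y = - Ω Y X)
    (hclosed : ∀ X Y Z : g, Ω ⁅X, Y⁆ Z + Ω ⁅Y, Z⁆ X + Ω ⁅Z, X⁆ Y = 0)
    (htame : ∀ X : g, X ≠ 0 → 0 < Ω X (J X))
    (gΩ : g → g → ℝ)
    (hgΩ : ∀ X Y : g, gΩ X Y = (Ω X (J Y) + Ω Y (J X)) / 2) :
    (∀ X Y : g, gΩ X Y = gΩ Y X) ∧
    (∀ X : g, X ≠ 0 → 0 < gΩ X X) ∧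
    (∀ X Y : g, gΩ (J X) (J Y) = gΩ X Y) ∧
    (∀ X Y Z W : g, dC (bismutC gΩ J) X Y Z W = 0) := by
  refine ⟨?_, ?_, ?_, ?_⟩
  · intro X Y; rw [hgΩ, hgΩ]; ring
  · intro X hX; rw [hgΩ]; have := htame X hX; linarith
  · intro X Y
    rw [hgΩ, hgΩ, hJ2, hJ2, map_neg, map_neg]
    have h1 := halt X (J Y); have h2 := halt Y (J X); linarith
  · have hadd : ∀ a b : g, ⁅a, b⁆ + ⁅b, a⁆ = 0 := by
      intro a b; rw [← lie_skew]; exact neg_add_cancel _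
    have hjac : ∀ U V T : g, (⁅⁅U, V⁆, T⁆ + ⁅⁅V, T⁆, U⁆ + ⁅⁅T, U⁆, V⁆ : g) = 0 := by
      intro U V T
      have h := lie_jacobi T U V
      rw [show (⁅⁅U, V⁆, T⁆ : g) = -⁅T, ⁅U, V⁆⁆ from (lie_skew _ _).symm,
          show (⁅⁅V, T⁆, U⁆ : g) = -⁅U, ⁅V, T⁆⁆ from (lie_skew _ _).symm,
          show (⁅⁅T, U⁆, V⁆ : g) = -⁅V, ⁅T, U⁆⁆ from (lie_skew _ _).symm,
          ← neg_add, ← neg_add, h, neg_zero]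
    have oalt : ∀ a b : g, Ω a b + Ω b a = 0 := by
      intro a b; have := halt a b; linarith
    have ojac1 : ∀ s U V T : g,
        Ω ⁅⁅U, V⁆, T⁆ s + Ω ⁅⁅V, T⁆, U⁆ s + Ω ⁅⁅T, U⁆, V⁆ s = 0 := by
      intro s U V T
      have h := congrArg (fun z => Ω z s) (hjac U V T)
      simp only [map_add, map_sub, map_neg, map_zero, add_lie, sub_lie, neg_lie, zero_lie, lie_add, lie_sub, lie_neg, lie_zero, LinearMap.add_apply, LinearMap.sub_apply, LinearMap.neg_apply, LinearMap.zero_apply, hJ2] at h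
      linarith
    have ojacJ : ∀ s U V T : g,
        Ω (J ⁅⁅U, V⁆, T⁆) s + Ω (J ⁅⁅V, T⁆, U⁆) s + Ω (J ⁅⁅T, U⁆, V⁆) s = 0 := by
      intro s U V T
      have h := congrArg (fun z => Ω (J z) s) (hjac U V T)
      simp only [map_add, map_sub, map_neg, map_zero, add_lie, sub_lie, neg_lie, zero_lie, lie_add, lie_sub, lie_neg, lie_zero, LinearMap.add_apply, LinearMap.sub_apply, LinearMap.neg_apply, LinearMap.zero_apply, hJ2] at h
      linarith
    have ointA : ∀ s U V : g,
        Ω ⁅U, V⁆ s - Ω ⁅J U, J V⁆ s + Ω (J ⁅J U, V⁆) s + Ω (J ⁅U, J V⁆) s = 0 := by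
      intro s U V
      have h := congrArg (fun z => Ω z s) (hJint U V)
      simp only [map_add, map_sub, map_neg, map_zero, add_lie, sub_lie, neg_lie, zero_lie, lie_add, lie_sub, lie_neg, lie_zero, LinearMap.add_apply, LinearMap.sub_apply, LinearMap.neg_apply, LinearMap.zero_apply, hJ2] at h
      linarith
    have ointB : ∀ s U V : g,
        Ω (J ⁅U, V⁆) s - Ω (J ⁅J U, J V⁆) s - Ω ⁅J U, V⁆ s - Ω ⁅U, J V⁆ s = 0 := by
      intro s U V
      have h := congrArg (fun z => Ω (J z) s) (hJint U V)
      simp only [map_add, map_sub, map_neg, map_zero, add_lie, sub_lie, neg_lie, zero_lie, lie_add, lie_sub, lie_neg, lie_zero, LinearMap.add_apply, LinearMap.sub_apply, LinearMap.neg_apply, LinearMap.zero_apply, hJ2] at h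
      linarith
    have ointC : ∀ s T U V : g,
        Ω ⁅⁅U, V⁆, T⁆ s - Ω ⁅⁅J U, J V⁆, T⁆ s + Ω ⁅J ⁅J U, V⁆, T⁆ s + Ω ⁅J ⁅U, J V⁆, T⁆ s = 0 := by
      intro s T U V
      have h := congrArg (fun z => Ω ⁅z, T⁆ s) (hJint U V)
      simp only [map_add, map_sub, map_neg, map_zero, add_lie, sub_lie, neg_lie, zero_lie, lie_add, lie_sub, lie_neg, lie_zero, LinearMap.add_apply, LinearMap.sub_apply, LinearMap.neg_apply, LinearMap.zero_apply, hJ2] at h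
      linarith
    have ointD : ∀ s T U V : g,
        Ω (J ⁅⁅U, V⁆, T⁆) s - Ω (J ⁅⁅J U, J V⁆, T⁆) s + Ω (J ⁅J ⁅J U, V⁆, T⁆) s + Ω (J ⁅J ⁅U, J V⁆, T⁆) s = 0 := by
      intro s T U V
      have h := congrArg (fun z => Ω (J ⁅z, T⁆) s) (hJint U V)
      simp only [map_add, map_sub, map_neg, map_zero, add_lie, sub_lie, neg_lie, zero_lie, lie_add, lie_sub, lie_neg, lie_zero, LinearMap.add_apply, LinearMap.sub_apply, LinearMap.neg_apply, LinearMap.zero_apply, hJ2] at h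
      linarith
    have ointE : ∀ s T U V : g,
        Ω ⁅J ⁅U, V⁆, T⁆ s - Ω ⁅J ⁅J U, J V⁆, T⁆ s - Ω ⁅⁅J U, V⁆, T⁆ s - Ω ⁅⁅U, J V⁆, T⁆ s = 0 := by
      intro s T U V
      have h := congrArg (fun z => Ω ⁅J z, T⁆ s) (hJint U V)
      simp only [map_add, map_sub, map_neg, map_zero, add_lie, sub_lie, neg_lie, zero_lie, lie_add, lie_sub, lie_neg, lie_zero, LinearMap.add_apply, LinearMap.sub_apply, LinearMap.neg_apply, LinearMap.zero_apply, hJ2] at h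
      linarith
    have ointF : ∀ s T U V : g,
        Ω (J ⁅J ⁅U, V⁆, T⁆) s - Ω (J ⁅J ⁅J U, J V⁆, T⁆) s - Ω (J ⁅⁅J U, V⁆, T⁆) s - Ω (J ⁅⁅U, J V⁆, T⁆) s = 0 := by
      intro s T U V
      have h := congrArg (fun z => Ω (J ⁅J z, T⁆) s) (hJint U V)
      simp only [map_add, map_sub, map_neg, map_zero, add_lie, sub_lie, neg_lie, zero_lie, lie_add, lie_sub, lie_neg, lie_zero, LinearMap.add_apply, LinearMap.sub_apply, LinearMap.neg_apply, LinearMap.zero_apply, hJ2] at h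
      linarith
    have osB : ∀ s a b : g, Ω ⁅a, b⁆ s + Ω ⁅b, a⁆ s = 0 := by
      intro s a b
      have h := congrArg (fun z => Ω z s) (hadd a b)
      simp only [map_add, map_sub, map_neg, map_zero, add_lie, sub_lie, neg_lie, zero_lie, lie_add, lie_sub, lie_neg, lie_zero, LinearMap.add_apply, LinearMap.sub_apply, LinearMap.neg_apply, LinearMap.zero_apply, hJ2] at h
      linarith
    have osBJ : ∀ s a b : g, Ω (J ⁅a, b⁆) s + Ω (J ⁅b, a⁆) s = 0 := by
      intro s a b
      have h := congrArg (fun z => Ω (J z) s) (hadd a b)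
      simp only [map_add, map_sub, map_neg, map_zero, add_lie, sub_lie, neg_lie, zero_lie, lie_add, lie_sub, lie_neg, lie_zero, LinearMap.add_apply, LinearMap.sub_apply, LinearMap.neg_apply, LinearMap.zero_apply, hJ2] at h
      linarith
    have osI : ∀ s c a b : g, Ω ⁅⁅a, b⁆, c⁆ s + Ω ⁅⁅b, a⁆, c⁆ s = 0 := by
      intro s c a b
      have h := congrArg (fun z => Ω ⁅z, c⁆ s) (hadd a b)
      simp only [map_add, map_sub, map_neg, map_zero, add_lie, sub_lie, neg_lie, zero_lie, lie_add, lie_sub, lie_neg, lie_zero, LinearMap.add_apply, LinearMap.sub_apply, LinearMap.neg_apply, LinearMap.zero_apply, hJ2] at h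
      linarith
    have osIJ : ∀ s c a b : g, Ω ⁅J ⁅a, b⁆, c⁆ s + Ω ⁅J ⁅b, a⁆, c⁆ s = 0 := by
      intro s c a b
      have h := congrArg (fun z => Ω ⁅J z, c⁆ s) (hadd a b)
      simp only [map_add, map_sub, map_neg, map_zero, add_lie, sub_lie, neg_lie, zero_lie, lie_add, lie_sub, lie_neg, lie_zero, LinearMap.add_apply, LinearMap.sub_apply, LinearMap.neg_apply, LinearMap.zero_apply, hJ2] at h
      linarith
    have osI2 : ∀ s p a b : g, Ω ⁅p, ⁅a, b⁆⁆ s + Ω ⁅p, ⁅b, a⁆⁆ s = 0 := by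
      intro s p a b
      have h := congrArg (fun z => Ω ⁅p, z⁆ s) (hadd a b)
      simp only [map_add, map_sub, map_neg, map_zero, add_lie, sub_lie, neg_lie, zero_lie, lie_add, lie_sub, lie_neg, lie_zero, LinearMap.add_apply, LinearMap.sub_apply, LinearMap.neg_apply, LinearMap.zero_apply, hJ2] at h
      linarith
    have osIJ2 : ∀ s p a b : g, Ω ⁅p, J ⁅a, b⁆⁆ s + Ω ⁅p, J ⁅b, a⁆⁆ s = 0 := by
      intro s p a b
      have h := congrArg (fun z => Ω ⁅p, J z⁆ s) (hadd a b)
      simp only [map_add, map_sub, map_neg, map_zero, add_lie, sub_lie, neg_lie, zero_lie, lie_add, lie_sub, lie_neg, lie_zero, LinearMap.add_apply, LinearMap.sub_apply, LinearMap.neg_apply, LinearMap.zero_apply, hJ2] at h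
      linarith
    have osIO : ∀ s c a b : g, Ω (J ⁅⁅a, b⁆, c⁆) s + Ω (J ⁅⁅b, a⁆, c⁆) s = 0 := by
      intro s c a b
      have h := congrArg (fun z => Ω (J ⁅z, c⁆) s) (hadd a b)
      simp only [map_add, map_sub, map_neg, map_zero, add_lie, sub_lie, neg_lie, zero_lie, lie_add, lie_sub, lie_neg, lie_zero, LinearMap.add_apply, LinearMap.sub_apply, LinearMap.neg_apply, LinearMap.zero_apply, hJ2] at h
      linarith
    have osIJO : ∀ s c a b : g, Ω (J ⁅J ⁅a, b⁆, c⁆) s + Ω (J ⁅J ⁅b, a⁆, c⁆) s = 0 := by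
      intro s c a b
      have h := congrArg (fun z => Ω (J ⁅J z, c⁆) s) (hadd a b)
      simp only [map_add, map_sub, map_neg, map_zero, add_lie, sub_lie, neg_lie, zero_lie, lie_add, lie_sub, lie_neg, lie_zero, LinearMap.add_apply, LinearMap.sub_apply, LinearMap.neg_apply, LinearMap.zero_apply, hJ2] at h
      linarith
    have osIO2 : ∀ s p a b : g, Ω (J ⁅p, ⁅a, b⁆⁆) s + Ω (J ⁅p, ⁅b, a⁆⁆) s = 0 := by
      intro s p a b
      have h := congrArg (fun z => Ω (J ⁅p, z⁆) s) (hadd a b)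
      simp only [map_add, map_sub, map_neg, map_zero, add_lie, sub_lie, neg_lie, zero_lie, lie_add, lie_sub, lie_neg, lie_zero, LinearMap.add_apply, LinearMap.sub_apply, LinearMap.neg_apply, LinearMap.zero_apply, hJ2] at h
      linarith
    have osIJO2 : ∀ s p a b : g, Ω (J ⁅p, J ⁅a, b⁆⁆) s + Ω (J ⁅p, J ⁅b, a⁆⁆) s = 0 := by
      intro s p a b
      have h := congrArg (fun z => Ω (J ⁅p, J z⁆) s) (hadd a b)
      simp only [map_add, map_sub, map_neg, map_zero, add_lie, sub_lie, neg_lie, zero_lie, lie_add, lie_sub, lie_neg, lie_zero, LinearMap.add_apply, LinearMap.sub_apply, LinearMap.neg_apply, LinearMap.zero_apply, hJ2] at h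
      linarith
    intro X Y Z W
    simp only [dC, bismutC, hgΩ]
    linear_combination
      ((1 : ℝ)/2) * (hclosed ⁅X, Y⁆ (J Z) W) +
      ((1 : ℝ)/2) * (hclosed (J ⁅(J X), (J Y)⁆) Z W) +
      ((-1 : ℝ)/2) * (hclosed (J ⁅X, Z⁆) (J Y) (J W)) +
      ((-1 : ℝ)/2) * (hclosed (J ⁅(J X), (J Z)⁆) Y W) +
      ((-1 : ℝ)/2) * (hclosed ⁅X, Z⁆ (J W) Y) +
      ((1 : ℝ)/2) * (hclosed (J ⁅X, W⁆) (J Y) (J Z)) +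
      ((-1 : ℝ)/2) * (hclosed ⁅X, (J W)⁆ Y Z) +
      ((-1 : ℝ)/2) * (hclosed ⁅(J X), W⁆ Y Z) +
      ((-1 : ℝ)/2) * (hclosed ⁅X, W⁆ (J Z) Y) +
      ((1 : ℝ)/2) * (hclosed (J ⁅Y, X⁆) (J W) (J Z)) +
      ((1 : ℝ)/2) * (hclosed ⁅Y, Z⁆ X (J W)) +
      ((1 : ℝ)/2) * (hclosed (J ⁅Y, Z⁆) X W) +
      ((-1 : ℝ)/2) * (hclosed ⁅(J Y), Z⁆ X W) +
      ((-1 : ℝ)/2) * (hclosed (J ⁅(J Y), (J W)⁆) X Z) +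
      ((1 : ℝ)/2) * (hclosed ⁅Z, X⁆ Y (J W)) +
      ((-1 : ℝ)/2) * (hclosed (J ⁅Z, X⁆) W Y) +
      ((1 : ℝ)/2) * (hclosed ⁅Z, (J X)⁆ W Y) +
      ((1 : ℝ)/2) * (hclosed (J ⁅(J Z), (J X)⁆) W Y) +
      ((1 : ℝ)/2) * (hclosed ⁅Z, Y⁆ X (J W)) +
      ((-1 : ℝ)/2) * (hclosed (J ⁅Z, Y⁆) (J X) (J W)) +
      ((1 : ℝ)/2) * (hclosed ⁅(J Z), W⁆ X Y) +
      ((-1 : ℝ)/2) * (hclosed (J ⁅Z, W⁆) (J Y) (J X)) +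
      ((-1 : ℝ)/2) * (hclosed (J ⁅W, X⁆) Y Z) +
      ((1 : ℝ)/2) * (hclosed ⁅W, Y⁆ X (J Z)) +
      ((-1 : ℝ)/2) * (hclosed (J ⁅W, Y⁆) (J Z) (J X)) +
      ((1 : ℝ)/2) * (hclosed (J ⁅(J W), (J Z)⁆) Y X) +
      ((-1 : ℝ)/2) * (ojacJ X Y W Z) +
      ((1 : ℝ)/2) * (ojac1 X Y (J W) Z) +
      ((1 : ℝ)/2) * (ojac1 X (J Y) W Z) +
      ((1 : ℝ)/2) * (ojac1 Y X Z (J W)) +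
      ((1 : ℝ)/2) * (ojac1 Y (J X) Z W) +
      ((1 : ℝ)/2) * (ojacJ Y X W Z) +
      ((-1 : ℝ)/2) * (ojacJ Z X W Y) +
      ((1 : ℝ)/2) * (ojac1 Z X W (J Y)) +
      ((1 : ℝ)/2) * (ojac1 Z X (J W) Y) +
      ((1 : ℝ)/2) * (ojac1 Z (J X) W Y) +
      ((-1 : ℝ)/2) * (ojac1 (J Z) X W Y) +
      ((-1 : ℝ)/2) * (ojacJ W X Y Z) +
      ((1 : ℝ)/2) * (ojac1 W X (J Y) Z) +
      ((-1 : ℝ)/2) * (ojacJ W (J X) (J Y) Z) +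
      ((-1 : ℝ)/2) * (ojac1 W (J X) Z Y) +
      ((-1 : ℝ)/2) * (ojacJ W (J X) Z (J Y)) +
      ((1 : ℝ)/2) * (ointB W ⁅X, Y⁆ Z) +
      ((1 : ℝ)/2) * (ointB Z ⁅X, W⁆ Y) +
      ((-1 : ℝ)/2) * (ointB Y ⁅X, W⁆ Z) +
      ((1 : ℝ)/2) * (ointA Y Z ⁅X, (J W)⁆) +
      ((1 : ℝ)/2) * (ointB Z ⁅Y, X⁆ W) +
      ((-1 : ℝ)/2) * (ointA (J W) ⁅Y, Z⁆ X) +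
      ((1 : ℝ)/2) * (ointA W X ⁅Y, (J Z)⁆) +
      ((1 : ℝ)/2) * (ointB X W ⁅Y, Z⁆) +
      ((1 : ℝ)/2) * (ointA (J Z) ⁅Y, W⁆ X) +
      ((-1 : ℝ)/2) * (ointB X Z ⁅Y, W⁆) +
      ((1 : ℝ)/2) * (ointB W ⁅Z, X⁆ Y) +
      ((-1 : ℝ)/2) * (ointB Y ⁅Z, X⁆ W) +
      ((-1 : ℝ)/2) * (ointA (J W) ⁅Z, Y⁆ X) +
      ((1 : ℝ)/2) * (ointA W ⁅Z, (J Y)⁆ X) +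
      ((1 : ℝ)/2) * (ointB W X ⁅(J Z), (J Y)⁆) +
      ((-1 : ℝ)/2) * (ointB X ⁅Z, W⁆ Y) +
      ((-1 : ℝ)/2) * (ointA Y ⁅(J W), X⁆ Z) +
      ((-1 : ℝ)/2) * (ointA (J Z) X ⁅W, Y⁆) +
      ((-1 : ℝ)/2) * (ointA Z ⁅W, (J Y)⁆ X) +
      ((-1 : ℝ)/2) * (ointA Z ⁅(J W), Y⁆ X) +
      ((1 : ℝ)/2) * (ointB Z ⁅(J W), (J Y)⁆ X) +
      ((-1 : ℝ)/2) * (ointB Y ⁅W, Z⁆ X) +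
      ((1 : ℝ)/2) * (ointB ⁅Y, Z⁆ X W) +
      ((1 : ℝ)/2) * (ointB ⁅X, W⁆ Y Z) +
      ((-1 : ℝ)/2) * (ointB ⁅W, Y⁆ Z X) +
      ((1 : ℝ)/2) * (ointE W Z X Y) +
      ((1 : ℝ)/2) * (ointE Z W Y X) +
      ((1 : ℝ)/2) * (ointF (J W) X Y Z) +
      ((-1 : ℝ)/2) * (ointF W (J X) Y Z) +
      ((1 : ℝ)/2) * (ointE X Z Y W) +
      ((-1 : ℝ)/2) * (ointD W X Z Y) +
      ((1 : ℝ)/2) * (ointE W X Z Y) +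
      ((1 : ℝ)/2) * (ointF (J W) X Z Y) +
      ((1 : ℝ)/2) * (ointC W (J X) Z Y) +
      ((1 : ℝ)/2) * (ointD Z X W Y) +
      ((-1 : ℝ)/2) * (ointC Z (J X) W Y) +
      ((-1 : ℝ)/2) * (ointF Z (J X) W Y) +
      ((-1 : ℝ)/2) * (ointE Y X W Z) +
      ((1 : ℝ)/2) * (ointE X Y W Z) +
      ((-1 : ℝ)/2) * (oalt (J ⁅(J ⁅Y, W⁆), (J X)⁆) Z) +
      ((1 : ℝ)/2) * (osIJO Z (J X) Y W) +
      ((-1 : ℝ)/2) * (osB Y (J ⁅(J W), (J Z)⁆) X) +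
      ((1 : ℝ)/2) * (osB (J Z) ⁅X, W⁆ Y) +
      ((1 : ℝ)/2) * (osBJ W X (J ⁅(J Z), Y⁆)) +
      ((-1 : ℝ)/2) * (osIJO2 W X (J Z) Y) +
      ((-1 : ℝ)/2) * (osBJ X W ⁅Y, Z⁆) +
      ((1 : ℝ)/2) * (oalt (J ⁅Z, X⁆) ⁅W, Y⁆) +
      ((-1 : ℝ)/2) * (osI Y X W (J Z)) +
      ((1 : ℝ)/2) * (osIJO Z (J W) Y X) +
      ((-1 : ℝ)/2) * (osB Y (J W) ⁅Z, X⁆) +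
      ((1 : ℝ)/2) * (osB W (J ⁅Y, (J Z)⁆) (J X)) +
      ((-1 : ℝ)/2) * (osIJ W (J X) Y (J Z)) +
      ((-1 : ℝ)/2) * (osB Y (J ⁅(J W), X⁆) (J Z)) +
      ((-1 : ℝ)/2) * (oalt (J ⁅(J ⁅X, Z⁆), (J Y)⁆) W) +
      ((1 : ℝ)/2) * (osIJO W (J Y) X Z) +
      ((-1 : ℝ)/2) * (osB X Z (J ⁅Y, W⁆)) +
      ((1 : ℝ)/2) * (osIJ Z Y X W) +
      ((1 : ℝ)/2) * (osB W ⁅(J X), Y⁆ Z) +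
      ((1 : ℝ)/2) * (oalt (J ⁅Y, W⁆) ⁅(J Z), (J X)⁆) +
      ((-1 : ℝ)/2) * (osBJ ⁅(J Z), (J X)⁆ Y W) +
      ((1 : ℝ)/2) * (osB (J Z) (J W) (J ⁅X, Y⁆)) +
      ((1 : ℝ)/2) * (osBJ (J W) X ⁅Z, (J Y)⁆) +
      ((-1 : ℝ)/2) * (osIO2 (J W) X Z (J Y)) +
      ((-1 : ℝ)/2) * (osI Y W (J X) Z) +
      ((1 : ℝ)/2) * (osB (J ⁅Z, W⁆) (J Y) (J X)) +
      ((-1 : ℝ)/2) * (osB (J Z) W ⁅X, Y⁆) +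
      ((1 : ℝ)/2) * (oalt ⁅X, Y⁆ (J ⁅(J Z), (J W)⁆)) +
      ((-1 : ℝ)/2) * (osIJ (J Z) (J W) X Y) +
      ((-1 : ℝ)/2) * (oalt ⁅(J W), (J Z)⁆ (J ⁅Y, X⁆)) +
      ((1 : ℝ)/2) * (osIO (J W) (J X) Y Z) +
      ((-1 : ℝ)/2) * (osBJ W X ⁅(J Z), (J Y)⁆) +
      ((-1 : ℝ)/2) * (oalt X (J ⁅(J Z), (J ⁅Y, W⁆)⁆)) +
      ((1 : ℝ)/2) * (oalt (J ⁅Y, Z⁆) ⁅(J X), (J W)⁆) +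
      ((-1 : ℝ)/2) * (osBJ ⁅(J X), (J W)⁆ Y Z) +
      ((1 : ℝ)/2) * (osIO W Z (J Y) (J X)) +
      ((1 : ℝ)/2) * (oalt (J ⁅(J Y), (J ⁅Z, W⁆)⁆) X) +
      ((-1 : ℝ)/2) * (osBJ X (J Y) (J ⁅Z, W⁆)) +
      ((1 : ℝ)/2) * (osB (J Z) ⁅W, Y⁆ X) +
      ((-1 : ℝ)/2) * (osI (J Z) X W Y) +
      ((1 : ℝ)/2) * (osB W Z ⁅Y, (J X)⁆) +
      ((-1 : ℝ)/2) * (osI2 W Z Y (J X)) +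
      ((1 : ℝ)/2) * (osIO X Y W Z) +
      ((-1 : ℝ)/2) * (oalt ⁅Z, Y⁆ ⁅X, (J W)⁆) +
      ((1 : ℝ)/2) * (osB ⁅X, (J W)⁆ Z Y) +
      ((-1 : ℝ)/2) * (oalt ⁅X, Z⁆ ⁅Y, (J W)⁆) +
      ((1 : ℝ)/2) * (osB ⁅Y, (J W)⁆ X Z) +
      ((-1 : ℝ)/2) * (osBJ Y (J ⁅X, W⁆) (J Z)) +
      ((-1 : ℝ)/2) * (oalt ⁅X, Y⁆ ⁅(J Z), W⁆) +
      ((1 : ℝ)/2) * (osIO (J W) X Y (J Z)) +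
      ((-1 : ℝ)/2) * (oalt ⁅Z, X⁆ ⁅Y, (J W)⁆) +
      ((1 : ℝ)/2) * (osB ⁅X, Z⁆ (J W) Y) +
      ((1 : ℝ)/2) * (oalt ⁅Y, Z⁆ (J ⁅(J X), (J W)⁆)) +
      ((1 : ℝ)/2) * (osB X Z (J ⁅(J Y), (J W)⁆)) +
      ((1 : ℝ)/2) * (oalt (J ⁅(J ⁅X, W⁆), (J Y)⁆) Z) +
      ((-1 : ℝ)/2) * (osB (J X) (J ⁅Y, W⁆) (J Z)) +
      ((1 : ℝ)/2) * (osIJ (J X) (J Z) Y W) +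
      ((1 : ℝ)/2) * (osIO X W Z Y) +
      ((1 : ℝ)/2) * (osBJ Y Z (J ⁅(J W), X⁆)) +
      ((-1 : ℝ)/2) * (osIJO2 Y Z (J W) X) +
      ((-1 : ℝ)/2) * (osI2 X (J Z) W Y) +
      ((-1 : ℝ)/2) * (osBJ (J Z) (J X) ⁅Y, W⁆) +
      ((1 : ℝ)/2) * (osIO2 (J Z) (J X) Y W) +
      ((-1 : ℝ)/2) * (osB W Y (J ⁅(J Z), (J X)⁆)) +
      ((-1 : ℝ)/2) * (oalt Y (J ⁅(J W), (J ⁅X, Z⁆)⁆)) +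
      ((-1 : ℝ)/2) * (oalt (J ⁅Y, Z⁆) ⁅X, W⁆) +
      ((-1 : ℝ)/2) * (osB ⁅W, Y⁆ (J Z) X) +
      ((1 : ℝ)/2) * (oalt (J ⁅Z, Y⁆) ⁅(J X), (J W)⁆) +
      ((-1 : ℝ)/2) * (osB W X (J ⁅(J Y), (J Z)⁆)) +
      ((1 : ℝ)/2) * (osIJ2 W X (J Y) (J Z)) +
      ((1 : ℝ)/2) * (oalt Y (J ⁅(J ⁅Z, W⁆), (J X)⁆)) +
      ((-1 : ℝ)/2) * (osB W ⁅Y, (J Z)⁆ X) +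
      ((1 : ℝ)/2) * (osI W X Y (J Z)) +
      ((1 : ℝ)/2) * (osB ⁅X, W⁆ Y (J Z)) +
      ((1 : ℝ)/2) * (oalt (J ⁅(J W), (J ⁅Y, Z⁆)⁆) X) +
      ((1 : ℝ)/2) * (osB X ⁅W, (J Z)⁆ Y) +
      ((1 : ℝ)/2) * (osB (J X) (J ⁅Z, W⁆) (J Y)) +
      ((1 : ℝ)/2) * (osB W (J X) ⁅(J Z), (J Y)⁆) +
      ((1 : ℝ)/2) * (osIJ W X (J Y) (J Z)) +
      ((1 : ℝ)/2) * (oalt ⁅X, W⁆ (J ⁅(J Y), (J Z)⁆)) +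
      ((-1 : ℝ)/2) * (osBJ W ⁅Y, (J Z)⁆ (J X)) +
      ((1 : ℝ)/2) * (oalt ⁅(J Z), (J X)⁆ (J ⁅W, Y⁆)) +
      ((-1 : ℝ)/2) * (oalt ⁅W, Y⁆ (J ⁅(J Z), (J X)⁆)) +
      ((-1 : ℝ)/2) * (osBJ ⁅X, Y⁆ (J Z) (J W)) +
      ((-1 : ℝ)/2) * (osB X W ⁅Z, (J Y)⁆) +
      ((1 : ℝ)/2) * (osI2 X W Z (J Y)) +
      ((-1 : ℝ)/2) * (osIJO Y (J X) Z W) +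
      ((1 : ℝ)/2) * (oalt ⁅(J X), W⁆ ⁅Y, Z⁆) +
      ((-1 : ℝ)/2) * (oalt (J ⁅X, Y⁆) ⁅(J W), (J Z)⁆) +
      ((1 : ℝ)/2) * (osBJ ⁅(J W), (J Z)⁆ X Y) +
      ((1 : ℝ)/2) * (osIJ2 Y (J Z) (J W) X) +
      ((1 : ℝ)/2) * (osIJ2 (J X) (J W) Z Y) +
      ((-1 : ℝ)/2) * (oalt ⁅Z, (J X)⁆ ⁅W, Y⁆) +
      ((1 : ℝ)/2) * (osBJ W (J Y) ⁅Z, (J X)⁆) +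
      ((-1 : ℝ)/2) * (osIO2 W (J Y) Z (J X)) +
      ((1 : ℝ)/2) * (osB Z X (J ⁅(J W), (J Y)⁆)) +
      ((-1 : ℝ)/2) * (osIJ2 Z X (J W) (J Y)) +
      ((-1 : ℝ)/2) * (osI Y X Z (J W)) +
      ((-1 : ℝ)/2) * (osB Y W (J ⁅(J Z), (J X)⁆)) +
      ((1 : ℝ)/2) * (osIJ2 Y W (J Z) (J X)) +
      ((1 : ℝ)/2) * (osB Z X (J ⁅(J Y), (J W)⁆)) +
      ((-1 : ℝ)/2) * (osI X (J Y) W Z) +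
      ((1 : ℝ)/2) * (oalt (J ⁅(J ⁅Y, Z⁆), (J X)⁆) W) +
      ((1 : ℝ)/2) * (oalt ⁅X, W⁆ ⁅(J Y), Z⁆) +
      ((1 : ℝ)/2) * (osBJ Y ⁅(J W), X⁆ (J Z)) +
      ((1 : ℝ)/2) * (osB Y ⁅(J X), W⁆ Z) +
      ((-1 : ℝ)/2) * (osI Y Z (J X) W) +
      ((-1 : ℝ)/2) * (osIJO (J Z) X Y W) +
      ((1 : ℝ)/2) * (osB (J W) ⁅X, Z⁆ Y) +
      ((-1 : ℝ)/2) * (osI (J W) Y X Z) +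
      ((-1 : ℝ)/2) * (osIJ X Y W Z) +
      ((-1 : ℝ)/2) * (osBJ W (J ⁅(J Y), (J Z)⁆) (J X)) +
      ((1 : ℝ)/2) * (osBJ X ⁅Y, W⁆ Z) +
      ((-1 : ℝ)/2) * (osB Z W (J ⁅(J X), (J Y)⁆)) +
      ((-1 : ℝ)/2) * (osB (J ⁅Y, W⁆) (J Z) (J X)) +
      ((1 : ℝ)/2) * (osIJ2 Y Z W X) +
      ((1 : ℝ)/2) * (osIJO2 W (J X) (J Y) (J Z)) +
      ((1 : ℝ)/2) * (osBJ (J Z) X (J ⁅W, Y⁆)) +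
      ((1 : ℝ)/2) * (osB (J ⁅X, Y⁆) (J W) (J Z)) +
      ((1 : ℝ)/2) * (oalt W (J ⁅(J ⁅X, Y⁆), (J Z)⁆)) +
      ((1 : ℝ)/2) * (oalt (J ⁅(J W), (J ⁅X, Y⁆)⁆) Z) +
      ((-1 : ℝ)/2) * (osBJ Z (J W) (J ⁅X, Y⁆)) +
      ((1 : ℝ)/2) * (oalt Y (J ⁅(J Z), (J ⁅X, W⁆)⁆)) +
      ((1 : ℝ)/2) * (osBJ Y (J W) (J ⁅X, Z⁆)) +
      ((1 : ℝ)/2) * (osIJ Z W (J Y) (J X)) +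
      ((-1 : ℝ)/2) * (osB W (J ⁅Z, Y⁆) X) +
      ((1 : ℝ)/2) * (osB (J Y) (J ⁅Z, W⁆) (J X)) +
      ((1 : ℝ)/2) * (osIJO (J W) X (J Z) (J Y)) +
      ((-1 : ℝ)/2) * (osB (J W) (J ⁅Y, X⁆) (J Z)) +
      ((1 : ℝ)/2) * (osIJ (J W) (J Z) Y X) +
      ((1 : ℝ)/2) * (osI (J Z) W X Y) +
      ((1 : ℝ)/2) * (osB W (J ⁅Z, X⁆) Y) +
      ((1 : ℝ)/2) * (osIJ W Y (J X) (J Z)) +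
      ((1 : ℝ)/2) * (oalt (J ⁅(J W), (J Z)⁆) ⁅X, Y⁆) +
      ((-1 : ℝ)/2) * (osIJO Y (J W) X Z) +
      ((-1 : ℝ)/2) * (osI Y (J X) W Z) +
      ((1 : ℝ)/2) * (osIO W X Y Z) +
      ((-1 : ℝ)/2) * (osB X (J W) ⁅Z, Y⁆) +
      ((1 : ℝ)/2) * (osIJ2 W X Z Y) +
      ((-1 : ℝ)/2) * (osBJ ⁅Y, Z⁆ X W) +
      ((1 : ℝ)/2) * (osBJ (J W) ⁅(J Y), Z⁆ X) +
      ((1 : ℝ)/2) * (oalt (J ⁅W, X⁆) ⁅Y, Z⁆) +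
      ((-1 : ℝ)/2) * (osIO2 Y (J Z) (J W) X) +
      ((-1 : ℝ)/2) * (osI2 X Y W (J Z)) +
      ((-1 : ℝ)/2) * (osB (J ⁅(J W), (J Z)⁆) Y X) +
      ((1 : ℝ)/2) * (osB W ⁅(J X), Z⁆ Y) +
      ((-1 : ℝ)/2) * (osI2 W Y (J X) Z) +
      ((-1 : ℝ)/2) * (osB W X (J ⁅Y, Z⁆)) +
      ((1 : ℝ)/2) * (osBJ W (J Y) ⁅(J X), Z⁆) +
      ((-1 : ℝ)/2) * (osB Y Z (J ⁅X, W⁆))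
end

section
/- Let g be a finite-dimensional nilpotent real Lie algebra with complex structure J whose center ξ is J-invariant, and let Ĵ be the induced complex structure on g/ξ given by Ĵ(X+ξ) = JX+ξ. Define the ascending series of (g,J) by g^J_0 = {0} and g^J_l = {X ∈ g : [X,Y] ∈ g^J_{l−1} and [JX,Y] ∈ g^J_{l−1} for all Y ∈ g}, and call J nilpotent if g^J_h = g for some h; define the analogous series and notion for (g/ξ, Ĵ). If Ĵ is nilpotent, then J is nilpotent. -/
/-- The ascending series of a Lie algebra endowed with a map `J`:
`g^J_0 = {0}`, `g^J_{l+1} = {X | ∀ Y, [X,Y] ∈ g^J_l ∧ [JX,Y] ∈ g^J_l}`. -/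
def ascSeries {g : Type*} [LieRing g] (J : g → g) : ℕ → Set g
  | 0 => {0}
  | l + 1 => {X | ∀ Y, ⁅X, Y⁆ ∈ ascSeries J l ∧ ⁅J X, Y⁆ ∈ ascSeries J l}

/-- A map `J` on a Lie algebra is nilpotent (as a complex structure) if its ascending
series exhausts the Lie algebra. -/
def IsNilpotentCx {g : Type*} [LieRing g] (J : g → g) : Prop :=
  ∃ h : ℕ, ascSeries J h = Set.univ

/-- if the center `ξ` of a nilpotent Lie algebra `(g, J)` is `J`-invariant and
the induced complex structure `Ĵ` on `g ⧸ ξ` is nilpotent, then `J` is nilpotent. -/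
theorem nilpotent_J_of_nilpotent_quotient
    {g : Type*} [LieRing g] [LieAlgebra ℝ g] [FiniteDimensional ℝ g]
    [LieRing.IsNilpotent g]
    (J : g →ₗ[ℝ] g)
    (hJ2 : ∀ X : g, J (J X) = -X)
    (hJint : ∀ X Y : g, ⁅X, Y⁆ - ⁅J X, J Y⁆ + J ⁅J X, Y⁆ + J ⁅X, J Y⁆ = 0)
    (hξ : ∀ X : g, X ∈ LieAlgebra.center ℝ g → J X ∈ LieAlgebra.center ℝ g)
    (Jq : (g ⧸ LieAlgebra.center ℝ g) →ₗ[ℝ] (g ⧸ LieAlgebra.center ℝ g))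
    (hJq : ∀ X : g,
      Jq (LieSubmodule.Quotient.mk (N := LieAlgebra.center ℝ g) X) =
        LieSubmodule.Quotient.mk (N := LieAlgebra.center ℝ g) (J X))
    (hquot : IsNilpotentCx (fun x => Jq x)) :
    IsNilpotentCx (fun X : g => J X) := by
  obtain ⟨h, hh⟩ := hquot
  have key : ∀ l (X : g),
      (LieSubmodule.Quotient.mk (N := LieAlgebra.center ℝ g) X)
        ∈ ascSeries (fun x => Jq x) l →
      X ∈ ascSeries (fun X : g => J X) (l + 1) := by
    intro l
    induction l with
    | zero =>
      intro X hX
      simp only [ascSeries, Set.mem_singleton_iff, LieSubmodule.Quotient.mk_eq_zero'] at hX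
      have hXc : X ∈ LieAlgebra.center ℝ g := hX
      have hJXc : J X ∈ LieAlgebra.center ℝ g := hξ X hXc
      intro Y
      simp only [ascSeries, Set.mem_singleton_iff]
      constructor
      · have := hXc Y
        rw [← lie_skew, this, neg_zero]
      · have := hJXc Y
        rw [← lie_skew, this, neg_zero]
    | succ l ih =>
      intro X hX
      intro Y
      constructor
      · apply ih
        have h1 := (hX (LieSubmodule.Quotient.mk (N := LieAlgebra.center ℝ g) Y)).1
        simpa using h1
      · apply ih
        have h2 := (hX (LieSubmodule.Quotient.mk (N := LieAlgebra.center ℝ g) Y)).2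
        simp only [hJq] at h2
        simpa using h2
  refine ⟨h + 1, Set.eq_univ_of_forall fun X => key h X ?_⟩
  rw [hh]; trivial
end

section
/- Let h₃^ℂ be the 6-dimensional real Lie algebra with basis e₁,…,e₆ whose only nonzero brackets among basis elements are [e₁,e₃] = e₅, [e₂,e₄] = −e₅, [e₁,e₄] = e₆, [e₂,e₃] = e₆ (the real Lie algebra underlying the 3-dimensional complex Heisenberg Lie algebra), and let g = h₃^ℂ ⊕ ℝ² (direct sum with a 2-dimensional abelian Lie algebra). Then g admits an SKT structure: there exist a complex structure J on g and a J-compatible inner product whose Bismut torsion 3-form is closed. -/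
set_option maxHeartbeats 4000000 in
/-- the Lie algebra `h₃^ℂ ⊕ ℝ²` (basis `e₁,…,e₈`, i.e. `e 0, …, e 7` below,
with nonzero brackets `[e₁,e₃]=e₅`, `[e₂,e₄]=−e₅`, `[e₁,e₄]=e₆`, `[e₂,e₃]=e₆`) admits an
SKT structure: a complex structure `J` together with a `J`-compatible inner product whose
Bismut torsion 3-form is closed. -/
theorem h3C_plus_R2_admits_SKT
    {g : Type*} [LieRing g] [LieAlgebra ℝ g]
    (e : Module.Basis (Fin 8) ℝ g)
    (h13 : ⁅e 0, e 2⁆ = e 4)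
    (h24 : ⁅e 1, e 3⁆ = -e 4)
    (h14 : ⁅e 0, e 3⁆ = e 5)
    (h23 : ⁅e 1, e 2⁆ = e 5)
    (hzero : ∀ i j : Fin 8,
      ¬ ((i = 0 ∧ j = 2) ∨ (i = 2 ∧ j = 0) ∨ (i = 1 ∧ j = 3) ∨ (i = 3 ∧ j = 1) ∨
         (i = 0 ∧ j = 3) ∨ (i = 3 ∧ j = 0) ∨ (i = 1 ∧ j = 2) ∨ (i = 2 ∧ j = 1)) →
      ⁅e i, e j⁆ = 0) :
    ∃ (J : g →ₗ[ℝ] g) (B : g →ₗ[ℝ] g →ₗ[ℝ] ℝ),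
      (∀ X : g, J (J X) = -X) ∧
      (∀ X Y : g, ⁅X, Y⁆ - ⁅J X, J Y⁆ + J ⁅J X, Y⁆ + J ⁅X, J Y⁆ = 0) ∧
      (∀ X Y : g, B X Y = B Y X) ∧
      (∀ X : g, X ≠ 0 → 0 < B X X) ∧
      (∀ X Y : g, B (J X) (J Y) = B X Y) ∧
      (∀ X Y Z W : g, dC (bismutC (fun a b => B a b) J) X Y Z W = 0) := by
  obtain ⟨c, hc2⟩ : ∃ c : ℝ, c^2 = 1/3 := ⟨Real.sqrt 3 / 3, by
    rw [div_pow, Real.sq_sqrt (by norm_num : (0:ℝ) ≤ 3)]; norm_num⟩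
  obtain ⟨s, hs2⟩ : ∃ s : ℝ, s^2 = 2/3 := ⟨Real.sqrt 6 / 3, by
    rw [div_pow, Real.sq_sqrt (by norm_num : (0:ℝ) ≤ 6)]; norm_num⟩
  -- zero brackets among basis vectors
  have z00 : ⁅e 0, e 0⁆ = (0:g) := hzero 0 0 (by decide)
  have z01 : ⁅e 0, e 1⁆ = (0:g) := hzero 0 1 (by decide)
  have z04 : ⁅e 0, e 4⁆ = (0:g) := hzero 0 4 (by decide)
  have z05 : ⁅e 0, e 5⁆ = (0:g) := hzero 0 5 (by decide)
  have z06 : ⁅e 0, e 6⁆ = (0:g) := hzero 0 6 (by decide)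
  have z07 : ⁅e 0, e 7⁆ = (0:g) := hzero 0 7 (by decide)
  have z10 : ⁅e 1, e 0⁆ = (0:g) := hzero 1 0 (by decide)
  have z11 : ⁅e 1, e 1⁆ = (0:g) := hzero 1 1 (by decide)
  have z14 : ⁅e 1, e 4⁆ = (0:g) := hzero 1 4 (by decide)
  have z15 : ⁅e 1, e 5⁆ = (0:g) := hzero 1 5 (by decide)
  have z16 : ⁅e 1, e 6⁆ = (0:g) := hzero 1 6 (by decide)
  have z17 : ⁅e 1, e 7⁆ = (0:g) := hzero 1 7 (by decide)
  have z22 : ⁅e 2, e 2⁆ = (0:g) := hzero 2 2 (by decide)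
  have z23 : ⁅e 2, e 3⁆ = (0:g) := hzero 2 3 (by decide)
  have z24 : ⁅e 2, e 4⁆ = (0:g) := hzero 2 4 (by decide)
  have z25 : ⁅e 2, e 5⁆ = (0:g) := hzero 2 5 (by decide)
  have z26 : ⁅e 2, e 6⁆ = (0:g) := hzero 2 6 (by decide)
  have z27 : ⁅e 2, e 7⁆ = (0:g) := hzero 2 7 (by decide)
  have z32 : ⁅e 3, e 2⁆ = (0:g) := hzero 3 2 (by decide)
  have z33 : ⁅e 3, e 3⁆ = (0:g) := hzero 3 3 (by decide)
  have z34 : ⁅e 3, e 4⁆ = (0:g) := hzero 3 4 (by decide)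
  have z35 : ⁅e 3, e 5⁆ = (0:g) := hzero 3 5 (by decide)
  have z36 : ⁅e 3, e 6⁆ = (0:g) := hzero 3 6 (by decide)
  have z37 : ⁅e 3, e 7⁆ = (0:g) := hzero 3 7 (by decide)
  have z40 : ⁅e 4, e 0⁆ = (0:g) := hzero 4 0 (by decide)
  have z41 : ⁅e 4, e 1⁆ = (0:g) := hzero 4 1 (by decide)
  have z42 : ⁅e 4, e 2⁆ = (0:g) := hzero 4 2 (by decide)
  have z43 : ⁅e 4, e 3⁆ = (0:g) := hzero 4 3 (by decide)
  have z44 : ⁅e 4, e 4⁆ = (0:g) := hzero 4 4 (by decide)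
  have z45 : ⁅e 4, e 5⁆ = (0:g) := hzero 4 5 (by decide)
  have z46 : ⁅e 4, e 6⁆ = (0:g) := hzero 4 6 (by decide)
  have z47 : ⁅e 4, e 7⁆ = (0:g) := hzero 4 7 (by decide)
  have z50 : ⁅e 5, e 0⁆ = (0:g) := hzero 5 0 (by decide)
  have z51 : ⁅e 5, e 1⁆ = (0:g) := hzero 5 1 (by decide)
  have z52 : ⁅e 5, e 2⁆ = (0:g) := hzero 5 2 (by decide)
  have z53 : ⁅e 5, e 3⁆ = (0:g) := hzero 5 3 (by decide)
  have z54 : ⁅e 5, e 4⁆ = (0:g) := hzero 5 4 (by decide)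
  have z55 : ⁅e 5, e 5⁆ = (0:g) := hzero 5 5 (by decide)
  have z56 : ⁅e 5, e 6⁆ = (0:g) := hzero 5 6 (by decide)
  have z57 : ⁅e 5, e 7⁆ = (0:g) := hzero 5 7 (by decide)
  have z60 : ⁅e 6, e 0⁆ = (0:g) := hzero 6 0 (by decide)
  have z61 : ⁅e 6, e 1⁆ = (0:g) := hzero 6 1 (by decide)
  have z62 : ⁅e 6, e 2⁆ = (0:g) := hzero 6 2 (by decide)
  have z63 : ⁅e 6, e 3⁆ = (0:g) := hzero 6 3 (by decide)
  have z64 : ⁅e 6, e 4⁆ = (0:g) := hzero 6 4 (by decide)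
  have z65 : ⁅e 6, e 5⁆ = (0:g) := hzero 6 5 (by decide)
  have z66 : ⁅e 6, e 6⁆ = (0:g) := hzero 6 6 (by decide)
  have z67 : ⁅e 6, e 7⁆ = (0:g) := hzero 6 7 (by decide)
  have z70 : ⁅e 7, e 0⁆ = (0:g) := hzero 7 0 (by decide)
  have z71 : ⁅e 7, e 1⁆ = (0:g) := hzero 7 1 (by decide)
  have z72 : ⁅e 7, e 2⁆ = (0:g) := hzero 7 2 (by decide)
  have z73 : ⁅e 7, e 3⁆ = (0:g) := hzero 7 3 (by decide)
  have z74 : ⁅e 7, e 4⁆ = (0:g) := hzero 7 4 (by decide)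
  have z75 : ⁅e 7, e 5⁆ = (0:g) := hzero 7 5 (by decide)
  have z76 : ⁅e 7, e 6⁆ = (0:g) := hzero 7 6 (by decide)
  have z77 : ⁅e 7, e 7⁆ = (0:g) := hzero 7 7 (by decide)
  have h31 : ⁅e 2, e 0⁆ = -e 4 := by rw [← lie_skew, h13]
  have h42 : ⁅e 3, e 1⁆ = e 4 := by rw [← lie_skew, h24]; simp
  have h41 : ⁅e 3, e 0⁆ = -e 5 := by rw [← lie_skew, h14]
  have h32 : ⁅e 2, e 1⁆ = -e 5 := by rw [← lie_skew, h23]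
  -- closed form for the bracket
  have hbr : ∀ X Y : g, ⁅X, Y⁆ =
      (e.repr X 0 * e.repr Y 2 - e.repr X 2 * e.repr Y 0 - e.repr X 1 * e.repr Y 3
        + e.repr X 3 * e.repr Y 1) • e 4 +
      (e.repr X 0 * e.repr Y 3 - e.repr X 3 * e.repr Y 0 + e.repr X 1 * e.repr Y 2
        - e.repr X 2 * e.repr Y 1) • e 5 := by
    intro X Y
    conv_lhs => rw [← e.sum_repr X, ← e.sum_repr Y]
    simp only [Fin.sum_univ_eight]
    simp only [add_lie, lie_add, smul_lie, lie_smul]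
    simp only [z00, z01, z04, z05, z06, z07, z10, z11, z14, z15, z16, z17, z22, z23, z24, z25, z26, z27, z32, z33, z34, z35, z36, z37, z40, z41, z42, z43, z44, z45, z46, z47, z50, z51, z52, z53, z54, z55, z56, z57, z60, z61, z62, z63, z64, z65, z66, z67, z70, z71, z72, z73, z74, z75, z76, z77, h13, h24, h14, h23, h31, h42, h41, h32,
      smul_zero, add_zero, zero_add]
    module
  -- the complex structure J
  set Jv : Fin 8 → g := fun i => match i with
    | 0 => c • e 1 - s • e 2
    | 1 => (-c) • e 0 + s • e 3
    | 2 => s • e 0 + c • e 3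
    | 3 => (-s) • e 1 - c • e 2
    | 4 => (3*c) • e 5
    | 5 => (-c) • e 4
    | 6 => e 7
    | 7 => -e 6 with hJv
  set J : g →ₗ[ℝ] g := e.constr ℝ Jv with hJdef
  have hJ : ∀ i, J (e i) = Jv i := fun i => e.constr_basis ℝ Jv i
  have hJ0 : J (e 0) = c • e 1 - s • e 2 := hJ 0
  have hJ1 : J (e 1) = (-c) • e 0 + s • e 3 := hJ 1
  have hJ2 : J (e 2) = s • e 0 + c • e 3 := hJ 2
  have hJ3 : J (e 3) = (-s) • e 1 - c • e 2 := hJ 3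
  have hJ4 : J (e 4) = (3*c) • e 5 := hJ 4
  have hJ5 : J (e 5) = (-c) • e 4 := hJ 5
  have hJ6 : J (e 6) = e 7 := hJ 6
  have hJ7 : J (e 7) = -e 6 := hJ 7
  have hJX : ∀ X : g, J X =
      (-c * e.repr X 1 + s * e.repr X 2) • e 0 + (c * e.repr X 0 - s * e.repr X 3) • e 1 +
      (-s * e.repr X 0 - c * e.repr X 3) • e 2 + (s * e.repr X 1 + c * e.repr X 2) • e 3 +
      (-c * e.repr X 5) • e 4 + (3*c*e.repr X 4) • e 5 + (- e.repr X 7) • e 6 +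
      (e.repr X 6) • e 7 := by
    intro X
    conv_lhs => rw [← e.sum_repr X]
    rw [map_sum, Fin.sum_univ_eight]
    simp only [map_smul, hJ0, hJ1, hJ2, hJ3, hJ4, hJ5, hJ6, hJ7]
    module
  have hrJ0 : ∀ X : g, e.repr (J X) 0 = -c * e.repr X 1 + s * e.repr X 2 := by
    intro X; rw [hJX X]
    simp [Finsupp.single_apply]
  have hrJ1 : ∀ X : g, e.repr (J X) 1 = c * e.repr X 0 - s * e.repr X 3 := by
    intro X; rw [hJX X]
    simp [Finsupp.single_apply, sub_eq_add_neg, neg_mul]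
  have hrJ2 : ∀ X : g, e.repr (J X) 2 = -s * e.repr X 0 - c * e.repr X 3 := by
    intro X; rw [hJX X]
    simp [Finsupp.single_apply, sub_eq_add_neg, neg_mul]
  have hrJ3 : ∀ X : g, e.repr (J X) 3 = s * e.repr X 1 + c * e.repr X 2 := by
    intro X; rw [hJX X]
    simp [Finsupp.single_apply]
  have hrJ4 : ∀ X : g, e.repr (J X) 4 = -c * e.repr X 5 := by
    intro X; rw [hJX X]
    simp [Finsupp.single_apply, neg_mul]
  have hrJ5 : ∀ X : g, e.repr (J X) 5 = 3*c * e.repr X 4 := by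
    intro X; rw [hJX X]
    simp [Finsupp.single_apply, mul_assoc]
  have hrJ6 : ∀ X : g, e.repr (J X) 6 = - e.repr X 7 := by
    intro X; rw [hJX X]
    simp [Finsupp.single_apply]
  have hrJ7 : ∀ X : g, e.repr (J X) 7 = e.repr X 6 := by
    intro X; rw [hJX X]
    simp [Finsupp.single_apply]
  -- the inner product B
  set B : g →ₗ[ℝ] g →ₗ[ℝ] ℝ :=
    (e.coord 0).smulRight (e.coord 0) + (e.coord 1).smulRight (e.coord 1) +
    (e.coord 2).smulRight (e.coord 2) + (e.coord 3).smulRight (e.coord 3) +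
    (e.coord 4).smulRight (e.coord 4) + (e.coord 5).smulRight ((1/3 : ℝ) • e.coord 5) +
    (e.coord 6).smulRight (e.coord 6) + (e.coord 7).smulRight (e.coord 7) with hBdef
  have hB : ∀ X Y : g, B X Y =
      e.repr X 0 * e.repr Y 0 + e.repr X 1 * e.repr Y 1 + e.repr X 2 * e.repr Y 2 +
      e.repr X 3 * e.repr Y 3 + e.repr X 4 * e.repr Y 4 + 1/3 * (e.repr X 5 * e.repr Y 5) +
      e.repr X 6 * e.repr Y 6 + e.repr X 7 * e.repr Y 7 := by
    intro X Y
    rw [hBdef]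
    simp only [LinearMap.add_apply, LinearMap.smulRight_apply, LinearMap.smul_apply,
      Module.Basis.coord_apply, smul_eq_mul]
    ring
  have hB44 : B (e 4) (e 4) = 1 := by rw [hB]; simp [Module.Basis.repr_self, Finsupp.single_apply]
  have hB45 : B (e 4) (e 5) = 0 := by rw [hB]; simp [Module.Basis.repr_self, Finsupp.single_apply]
  have hB54 : B (e 5) (e 4) = 0 := by rw [hB]; simp [Module.Basis.repr_self, Finsupp.single_apply]
  have hB55 : B (e 5) (e 5) = 1/3 := by rw [hB]; simp [Module.Basis.repr_self, Finsupp.single_apply]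
  refine ⟨J, B, ?_, ?_, ?_, ?_, ?_, ?_⟩
  · -- J ∘ J = -1
    intro X
    rw [hJX (J X)]
    simp only [hrJ0, hrJ1, hrJ2, hrJ3, hrJ4, hrJ5, hrJ6, hrJ7]
    conv_rhs => rw [← e.sum_repr X]
    rw [Fin.sum_univ_eight]
    match_scalars <;> first
      | ring1
      | linear_combination (-(e.repr X 0)) * hc2 + (-(e.repr X 0)) * hs2
      | linear_combination (-(e.repr X 1)) * hc2 + (-(e.repr X 1)) * hs2
      | linear_combination (-(e.repr X 2)) * hc2 + (-(e.repr X 2)) * hs2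
      | linear_combination (-(e.repr X 3)) * hc2 + (-(e.repr X 3)) * hs2
      | linear_combination (-3*(e.repr X 4)) * hc2
      | linear_combination (-3*(e.repr X 5)) * hc2
  · -- integrability
    intro X Y
    rw [hbr X Y, hbr (J X) (J Y), hbr (J X) Y, hbr X (J Y)]
    simp only [map_add, map_smul, hJ4, hJ5]
    simp only [hrJ0, hrJ1, hrJ2, hrJ3]
    match_scalars <;> first
      | ring1
      | linear_combination ((-1) * e.repr X 0 * e.repr Y 2 + (1) * e.repr X 1 * e.repr Y 3 + (1) * e.repr X 2 * e.repr Y 0 + (-1) * e.repr X 3 * e.repr Y 1) * hc2 + ((-1) * e.repr X 0 * e.repr Y 2 + (1) * e.repr X 1 * e.repr Y 3 + (1) * e.repr X 2 * e.repr Y 0 + (-1) * e.repr X 3 * e.repr Y 1) * hs2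
      | linear_combination ((-5) * e.repr X 0 * e.repr Y 3 + (-5) * e.repr X 1 * e.repr Y 2 + (5) * e.repr X 2 * e.repr Y 1 + (5) * e.repr X 3 * e.repr Y 0) * hc2 + ((1) * e.repr X 0 * e.repr Y 3 + (1) * e.repr X 1 * e.repr Y 2 + (-1) * e.repr X 2 * e.repr Y 1 + (-1) * e.repr X 3 * e.repr Y 0) * hs2
  · -- symmetry
    intro X Y
    rw [hB X Y, hB Y X]; ring
  · -- positivity
    intro X hX
    have hex : ∃ i, e.repr X i ≠ 0 := by
      by_contra h
      push_neg at h
      exact hX ((LinearEquiv.map_eq_zero_iff e.repr).mp (by ext i; simpa using h i))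
    obtain ⟨i, hi⟩ := hex
    have hBXX : B X X = ∑ k : Fin 8,
        (if k = (5 : Fin 8) then (1/3 : ℝ) else 1) * (e.repr X k * e.repr X k) := by
      rw [hB, Fin.sum_univ_eight]
      simp only [Fin.reduceEq, reduceIte]
      ring
    rw [hBXX]
    refine Finset.sum_pos' (fun k _ => ?_) ⟨i, Finset.mem_univ i, ?_⟩
    · split <;> nlinarith [mul_self_nonneg (e.repr X k)]
    · have hip : 0 < e.repr X i * e.repr X i := mul_self_pos.mpr hi
      split <;> nlinarith [hip]
  · -- compatibility
    intro X Y
    rw [hB (J X) (J Y), hB X Y]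
    simp only [hrJ0, hrJ1, hrJ2, hrJ3, hrJ4, hrJ5, hrJ6, hrJ7]
    linear_combination ((1) * e.repr X 0 * e.repr Y 0 + (1) * e.repr X 1 * e.repr Y 1 + (1) * e.repr X 2 * e.repr Y 2 + (1) * e.repr X 3 * e.repr Y 3 + (3) * e.repr X 4 * e.repr Y 4 + (1) * e.repr X 5 * e.repr Y 5) * hc2 + ((1) * e.repr X 0 * e.repr Y 0 + (1) * e.repr X 1 * e.repr Y 1 + (1) * e.repr X 2 * e.repr Y 2 + (1) * e.repr X 3 * e.repr Y 3) * hs2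
  · -- SKT: dc = 0
    intro X Y Z W
    have hcentL : ∀ U V Q : g, ⁅J ⁅U, V⁆, Q⁆ = (0:g) := by
      intro U V Q
      rw [hbr U V]
      rw [map_add, map_smul, map_smul, hJ4, hJ5]
      rw [hbr _ Q]
      simp [Finsupp.single_apply]
    have hcentR : ∀ Q U V : g, ⁅Q, J ⁅U, V⁆⁆ = (0:g) := by
      intro Q U V
      rw [← lie_skew, hcentL, neg_zero]
    have hBV : ∀ P Q U V : g, B ⁅P, Q⁆ ⁅U, V⁆ =
        (e.repr P 0 * e.repr Q 2 - e.repr P 2 * e.repr Q 0 - e.repr P 1 * e.repr Q 3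
          + e.repr P 3 * e.repr Q 1) *
        (e.repr U 0 * e.repr V 2 - e.repr U 2 * e.repr V 0 - e.repr U 1 * e.repr V 3
          + e.repr U 3 * e.repr V 1) +
        1/3 * ((e.repr P 0 * e.repr Q 3 - e.repr P 3 * e.repr Q 0 + e.repr P 1 * e.repr Q 2
          - e.repr P 2 * e.repr Q 1) *
        (e.repr U 0 * e.repr V 3 - e.repr U 3 * e.repr V 0 + e.repr U 1 * e.repr V 2
          - e.repr U 2 * e.repr V 1)) := by
      intro P Q U V
      rw [hbr P Q, hbr U V]
      simp only [map_add, map_smul, LinearMap.add_apply, LinearMap.smul_apply, smul_eq_mul,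
        hB44, hB45, hB54, hB55]
      ring
    simp only [dC, bismutC]
    simp only [hcentL, hcentR, map_zero, LinearMap.zero_apply, neg_zero, zero_sub, sub_zero,
      zero_add, add_zero, neg_neg]
    simp only [hBV]
    simp only [hrJ0, hrJ1, hrJ2, hrJ3]
    linear_combination ((8/3) * e.repr W 0 * e.repr X 1 * e.repr Y 2 * e.repr Z 3 + (-8/3) * e.repr W 0 * e.repr X 1 * e.repr Y 3 * e.repr Z 2 + (-8/3) * e.repr W 0 * e.repr X 2 * e.repr Y 1 * e.repr Z 3 + (8/3) * e.repr W 0 * e.repr X 2 * e.repr Y 3 * e.repr Z 1 + (8/3) * e.repr W 0 * e.repr X 3 * e.repr Y 1 * e.repr Z 2 + (-8/3) * e.repr W 0 * e.repr X 3 * e.repr Y 2 * e.repr Z 1 + (-8/3) * e.repr W 1 * e.repr X 0 * e.repr Y 2 * e.repr Z 3 + (8/3) * e.repr W 1 * e.repr X 0 * e.repr Y 3 * e.repr Z 2 + (8/3) * e.repr W 1 * e.repr X 2 * e.repr Y 0 * e.repr Z 3 + (-8/3) * e.repr W 1 * e.repr X 2 * e.repr Y 3 * e.repr Z 0 + (-8/3)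 * e.repr W 1 * e.repr X 3 * e.repr Y 0 * e.repr Z 2 + (8/3) * e.repr W 1 * e.repr X 3 * e.repr Y 2 * e.repr Z 0 + (8/3) * e.repr W 2 * e.repr X 0 * e.repr Y 1 * e.repr Z 3 + (-8/3) * e.repr W 2 * e.repr X 0 * e.repr Y 3 * e.repr Z 1 + (-8/3) * e.repr W 2 * e.repr X 1 * e.repr Y 0 * e.repr Z 3 + (8/3) * e.repr W 2 * e.repr X 1 * e.repr Y 3 * e.repr Z 0 + (8/3) * e.repr W 2 * e.repr X 3 * e.repr Y 0 * e.repr Z 1 + (-8/3) * e.repr W 2 * e.repr X 3 * e.repr Y 1 * e.repr Z 0 + (-8/3) * e.repr W 3 * e.repr X 0 * e.repr Y 1 * e.repr Z 2 + (8/3) * e.repr W 3 * e.repr X 0 * e.repr Y 2 * e.repr Z 1 + (8/3) * e.repr W 3 * e.repr X 1 * e.repr Y 0 * e.repr Z 2 + (-8/3) * e.repr W 3 * e.repr X 1 * e.repr Y 2 * e.repr Z 0 + (-8/3) * e.repr W 3 * e.repr X 2 * e.repr Y 0 * e.repr Z 1 + (8/3) * e.repr W 3 * e.repr X 2 * e.repr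 Y 1 * e.repr Z 0) * hc2 + ((-4/3) * e.repr W 0 * e.repr X 1 * e.repr Y 2 * e.repr Z 3 + (4/3) * e.repr W 0 * e.repr X 1 * e.repr Y 3 * e.repr Z 2 + (4/3) * e.repr W 0 * e.repr X 2 * e.repr Y 1 * e.repr Z 3 + (-4/3) * e.repr W 0 * e.repr X 2 * e.repr Y 3 * e.repr Z 1 + (-4/3) * e.repr W 0 * e.repr X 3 * e.repr Y 1 * e.repr Z 2 + (4/3) * e.repr W 0 * e.repr X 3 * e.repr Y 2 * e.repr Z 1 + (4/3) * e.repr W 1 * e.repr X 0 * e.repr Y 2 * e.repr Z 3 + (-4/3) * e.repr W 1 * e.repr X 0 * e.repr Y 3 * e.repr Z 2 + (-4/3) * e.repr W 1 * e.repr X 2 * e.repr Y 0 * e.repr Z 3 + (4/3) * e.repr W 1 * e.repr X 2 * e.repr Y 3 * e.repr Z 0 + (4/3) * e.repr W 1 * e.repr X 3 * e.repr Y 0 * e.repr Z 2 + (-4/3) * e.repr W 1 * e.repr X 3 * e.repr Y 2 * e.repr Z 0 + (-4/3) * e.repr W 2 * e.repr X 0 * e.repr Y 1 * e.repr Z 3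 + (4/3) * e.repr W 2 * e.repr X 0 * e.repr Y 3 * e.repr Z 1 + (4/3) * e.repr W 2 * e.repr X 1 * e.repr Y 0 * e.repr Z 3 + (-4/3) * e.repr W 2 * e.repr X 1 * e.repr Y 3 * e.repr Z 0 + (-4/3) * e.repr W 2 * e.repr X 3 * e.repr Y 0 * e.repr Z 1 + (4/3) * e.repr W 2 * e.repr X 3 * e.repr Y 1 * e.repr Z 0 + (4/3) * e.repr W 3 * e.repr X 0 * e.repr Y 1 * e.repr Z 2 + (-4/3) * e.repr W 3 * e.repr X 0 * e.repr Y 2 * e.repr Z 1 + (-4/3) * e.repr W 3 * e.repr X 1 * e.repr Y 0 * e.repr Z 2 + (4/3) * e.repr W 3 * e.repr X 1 * e.repr Y 2 * e.repr Z 0 + (4/3) * e.repr W 3 * e.repr X 2 * e.repr Y 0 * e.repr Z 1 + (-4/3) * e.repr W 3 * e.repr X 2 * e.repr Y 1 * e.repr Z 0) * hs2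
end

section
/- Let h₇^Q be the 7-dimensional real quaternionic Heisenberg Lie algebra, realized as the real vector space ℍ ⊕ Im ℍ with bracket [(q,u),(q′,u′)] = (0, Im(q̄ q′) − Im(q̄′ q))/normalization, i.e. the only nonzero brackets are those of the first factor landing in the center Im ℍ via the imaginary part of q̄ q′; concretely, with basis e₁,…,e₄ of ℍ and e₅,e₆,e₇ of Im ℍ, the nonzero brackets are [e₁,e₂] = e₅, [e₃,e₄] = e₅, [e₁,e₃] = e₆, [e₄,e₂] = e₆, [e₁,e₄] = e₇, [e₂,e₃] = e₇. Let g = h₇^Q ⊕ ℝ (direct sum with a 1-dimensional abelian Lie algebra). Then g admits an SKT structure: there exist a complex structure J on g and a J-compatible inner product whose Bismut torsion 3-form is closed. -/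
/-- Sign of the structure constant `[e i, e j]`. -/
def sIdx (i j : Fin 8) : ℤ :=
  if i = 0 ∧ j = 1 ∨ i = 2 ∧ j = 3 ∨ i = 0 ∧ j = 2 ∨ i = 3 ∧ j = 1 ∨ i = 0 ∧ j = 3 ∨ i = 1 ∧ j = 2
  then 1
  else if j = 0 ∧ i = 1 ∨ j = 2 ∧ i = 3 ∨ j = 0 ∧ i = 2 ∨ j = 3 ∧ i = 1 ∨ j = 0 ∧ i = 3 ∨ j = 1 ∧ i = 2
  then -1 else 0

/-- Target index of the structure constant `[e i, e j]`. -/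
def tIdx (i j : Fin 8) : Fin 8 :=
  if i = 0 ∧ j = 1 ∨ j = 0 ∧ i = 1 ∨ i = 2 ∧ j = 3 ∨ j = 2 ∧ i = 3 then 4
  else if i = 0 ∧ j = 2 ∨ j = 0 ∧ i = 2 ∨ i = 3 ∧ j = 1 ∨ j = 3 ∧ i = 1 then 5
  else if i = 0 ∧ j = 3 ∨ j = 0 ∧ i = 3 ∨ i = 1 ∧ j = 2 ∨ j = 1 ∧ i = 2 then 6
  else 0

/-- Index of `J (e i)` (`J` pairs `(0,1), (2,3), (4,7), (5,6)`). -/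
def jTf (i : Fin 8) : Fin 8 :=
  if i = 0 then 1 else if i = 1 then 0 else if i = 2 then 3 else if i = 3 then 2
  else if i = 4 then 7 else if i = 5 then 6 else if i = 6 then 5 else 4

/-- Sign of `J (e i)`. -/
def jSf (i : Fin 8) : ℤ := if i = 1 ∨ i = 3 ∨ i = 6 ∨ i = 7 then -1 else 1

/-- Diagonal weights of the inner product. -/
def wIf (i : Fin 8) : ℤ := if i = 4 ∨ i = 7 then 2 else 1

/-- `B ([J e a, J e b], e c)` as an integer. -/
def cBI (a b c : Fin 8) : ℤ :=
  jSf a * jSf b * sIdx (jTf a) (jTf b) * (if tIdx (jTf a) (jTf b) = c then wIf c else 0)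

/-- The Bismut torsion form on basis vectors, as an integer. -/
def cfI (a b c : Fin 8) : ℤ := -cBI a b c - cBI b c a - cBI c a b

/-- `dc` on basis vectors, as an integer. -/
def FI (i j k l : Fin 8) : ℤ :=
  - sIdx i j * cfI (tIdx i j) k l + sIdx i k * cfI (tIdx i k) j l
    - sIdx i l * cfI (tIdx i l) j k - sIdx j k * cfI (tIdx j k) i l
    + sIdx j l * cfI (tIdx j l) i k - sIdx k l * cfI (tIdx k l) i j

set_option maxHeartbeats 2000000 in
theorem FIzero : ∀ i j k l, FI i j k l = 0 := by decide

/-- one-slot linear extension: a function additive+homogeneous that kills a basis is zero. -/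
theorem lin1 {M N : Type*} [AddCommGroup M] [Module ℝ M] [AddCommGroup N] [Module ℝ N]
    {ι : Type*} [Fintype ι] (e : Module.Basis ι ℝ M) (f : M → N)
    (ha : ∀ a b, f (a + b) = f a + f b)
    (hs : ∀ (r : ℝ) a, f (r • a) = r • f a)
    (hb : ∀ i, f (e i) = 0) : ∀ x, f x = 0 := by
  intro x
  have hfx : f x = (AddMonoidHom.mk' f ha) x := rfl
  rw [hfx, ← e.sum_repr x, map_sum]
  exact Finset.sum_eq_zero fun i _ => by
    show f _ = 0
    rw [hs, hb, smul_zero]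

set_option maxHeartbeats 1600000 in
/-- the Lie algebra `h₇^Q ⊕ ℝ` (basis `e₁,…,e₈`, i.e. `e 0, …, e 7` below,
with nonzero brackets `[e₁,e₂]=e₅`, `[e₃,e₄]=e₅`, `[e₁,e₃]=e₆`, `[e₄,e₂]=e₆`,
`[e₁,e₄]=e₇`, `[e₂,e₃]=e₇`) admits an SKT structure: a complex structure `J` together with
a `J`-compatible inner product whose Bismut torsion 3-form is closed. -/
theorem h7Q_plus_R_admits_SKT
    {g : Type*} [LieRing g] [LieAlgebra ℝ g]
    (e : Module.Basis (Fin 8) ℝ g)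
    (h12 : ⁅e 0, e 1⁆ = e 4)
    (h34 : ⁅e 2, e 3⁆ = e 4)
    (h13 : ⁅e 0, e 2⁆ = e 5)
    (h42 : ⁅e 3, e 1⁆ = e 5)
    (h14 : ⁅e 0, e 3⁆ = e 6)
    (h23 : ⁅e 1, e 2⁆ = e 6)
    (hzero : ∀ i j : Fin 8,
      ¬ ((i = 0 ∧ j = 1) ∨ (i = 1 ∧ j = 0) ∨ (i = 2 ∧ j = 3) ∨ (i = 3 ∧ j = 2) ∨
         (i = 0 ∧ j = 2) ∨ (i = 2 ∧ j = 0) ∨ (i = 3 ∧ j = 1) ∨ (i = 1 ∧ j = 3) ∨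
         (i = 0 ∧ j = 3) ∨ (i = 3 ∧ j = 0) ∨ (i = 1 ∧ j = 2) ∨ (i = 2 ∧ j = 1)) →
      ⁅e i, e j⁆ = 0) :
    ∃ (J : g →ₗ[ℝ] g) (B : g →ₗ[ℝ] g →ₗ[ℝ] ℝ),
      (∀ X : g, J (J X) = -X) ∧
      (∀ X Y : g, ⁅X, Y⁆ - ⁅J X, J Y⁆ + J ⁅J X, Y⁆ + J ⁅X, J Y⁆ = 0) ∧
      (∀ X Y : g, B X Y = B Y X) ∧
      (∀ X : g, X ≠ 0 → 0 < B X X) ∧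
      (∀ X Y : g, B (J X) (J Y) = B X Y) ∧
      (∀ X Y Z W : g, dC (bismutC (fun a b => B a b) J) X Y Z W = 0) := by
  -- the complex structure
  set J : g →ₗ[ℝ] g := e.constr ℝ (fun i => ((jSf i : ℤ) : ℝ) • e (jTf i)) with hJdef
  have hJ : ∀ i, J (e i) = ((jSf i : ℤ) : ℝ) • e (jTf i) := fun i => e.constr_basis ℝ _ i
  -- the inner product
  set B : g →ₗ[ℝ] g →ₗ[ℝ] ℝ := LinearMap.mk₂ ℝ
      (fun X Y => ∑ k, ((wIf k : ℤ) : ℝ) * e.repr X k * e.repr Y k)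
      (fun X X' Y => by
        simp [map_add, Finsupp.add_apply, mul_add, add_mul, Finset.sum_add_distrib])
      (fun r X Y => by
        rw [Finset.smul_sum]
        refine Finset.sum_congr rfl fun k _ => ?_
        simp [map_smul, Finsupp.smul_apply, smul_eq_mul]; ring)
      (fun X Y Y' => by
        simp [map_add, Finsupp.add_apply, mul_add, add_mul, Finset.sum_add_distrib])
      (fun r X Y => by
        rw [Finset.smul_sum]
        refine Finset.sum_congr rfl fun k _ => ?_
        simp [map_smul, Finsupp.smul_apply, smul_eq_mul]; ring) with hBdef
  have hBapp : ∀ X Y : g, B X Y = ∑ k, ((wIf k : ℤ) : ℝ) * e.repr X k * e.repr Y k :=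
    fun X Y => rfl
  -- bracket on basis vectors
  have hlie : ∀ i j, ⁅e i, e j⁆ = ((sIdx i j : ℤ) : ℝ) • e (tIdx i j) := by
    intro i j
    rcases Decidable.em ((i = 0 ∧ j = 1) ∨ (i = 1 ∧ j = 0) ∨ (i = 2 ∧ j = 3) ∨ (i = 3 ∧ j = 2) ∨
           (i = 0 ∧ j = 2) ∨ (i = 2 ∧ j = 0) ∨ (i = 3 ∧ j = 1) ∨ (i = 1 ∧ j = 3) ∨
           (i = 0 ∧ j = 3) ∨ (i = 3 ∧ j = 0) ∨ (i = 1 ∧ j = 2) ∨ (i = 2 ∧ j = 1)) with h | h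
    · rcases h with ⟨rfl, rfl⟩ | ⟨rfl, rfl⟩ | ⟨rfl, rfl⟩ | ⟨rfl, rfl⟩ | ⟨rfl, rfl⟩ | ⟨rfl, rfl⟩ |
        ⟨rfl, rfl⟩ | ⟨rfl, rfl⟩ | ⟨rfl, rfl⟩ | ⟨rfl, rfl⟩ | ⟨rfl, rfl⟩ | ⟨rfl, rfl⟩ <;>
        simp +decide [sIdx, tIdx] <;>
        first
          | assumption
          | (rw [← lie_skew]; norm_num [h12, h34, h13, h42, h14, h23])
    · rw [hzero i j h]
      have hs : sIdx i j = 0 := by revert h; revert i j; decide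
      rw [hs]; simp
  -- inner product on basis vectors
  have hB : ∀ i j, B (e i) (e j) = if i = j then ((wIf i : ℤ) : ℝ) else 0 := by
    intro i j
    rw [hBapp]
    simp [Module.Basis.repr_self, Finsupp.single_apply, mul_ite, ite_mul, mul_one, mul_zero, zero_mul,
      Finset.sum_ite_eq, eq_comm]
    split_ifs with h <;> simp [h]
  -- J is a complex structure
  have hJJ : ∀ X : g, J (J X) = -X := by
    have key : ∀ i : Fin 8, jTf (jTf i) = i ∧ jSf i * jSf (jTf i) = -1 := by decide
    have hb : ∀ i, J (J (e i)) + e i = 0 := by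
      intro i
      rw [hJ i, map_smul, hJ, smul_smul, (key i).1, ← Int.cast_mul, (key i).2]
      simp
    have hall := lin1 e (fun X => J (J X) + X)
      (fun a b => by simp [map_add]; abel)
      (fun r a => by simp [map_smul, smul_add])
      hb
    intro X
    exact eq_neg_of_add_eq_zero_left (hall X)
  -- integrability
  have hint : ∀ X Y : g, ⁅X, Y⁆ - ⁅J X, J Y⁆ + J ⁅J X, Y⁆ + J ⁅X, J Y⁆ = 0 := by
    set f : g → g → g := fun X Y => ⁅X, Y⁆ - ⁅J X, J Y⁆ + J ⁅J X, Y⁆ + J ⁅X, J Y⁆ with hfdef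
    have key : ∀ i j m : Fin 8,
        sIdx i j * (if tIdx i j = m then 1 else 0)
          - jSf i * jSf j * sIdx (jTf i) (jTf j) * (if tIdx (jTf i) (jTf j) = m then 1 else 0)
          + jSf i * sIdx (jTf i) j * jSf (tIdx (jTf i) j) * (if jTf (tIdx (jTf i) j) = m then 1 else 0)
          + jSf j * sIdx i (jTf j) * jSf (tIdx i (jTf j)) * (if jTf (tIdx i (jTf j)) = m then 1 else 0)
          = 0 := by decide
    have hb : ∀ i j, f (e i) (e j) = 0 := by
      intro i j
      refine e.ext_elem fun m => ?_
      have hk := congrArg (fun n : ℤ => (n : ℝ)) (key i j m)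
      push_cast at hk
      simp only [hfdef]
      rw [hJ i, hJ j, smul_lie, lie_smul, lie_smul, smul_lie, hlie, hlie, hlie, hlie,
        map_smul, map_smul, map_smul, map_smul, hJ, hJ]
      simp only [map_add, map_sub, map_smul, Finsupp.add_apply, Finsupp.sub_apply,
        Finsupp.smul_apply, Module.Basis.repr_self_apply, smul_eq_mul, map_zero, Finsupp.coe_zero,
        Pi.zero_apply]
      push_cast
      linear_combination hk
    have hb1 : ∀ i (Y : g), f (e i) Y = 0 := fun i =>
      lin1 e (f (e i))
        (fun a b => by simp only [hfdef, lie_add, map_add]; abel)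
        (fun r a => by
          simp only [hfdef, lie_smul, map_smul, smul_sub, smul_add]; try abel)
        (hb i)
    intro X Y
    exact lin1 e (fun X' => f X' Y)
      (fun a b => by simp only [hfdef, add_lie, map_add]; abel)
      (fun r a => by
        simp only [hfdef, smul_lie, map_smul, smul_sub, smul_add]; try abel)
      (fun i => hb1 i Y) X
  -- symmetry
  have hsymm : ∀ X Y : g, B X Y = B Y X := by
    intro X Y
    rw [hBapp, hBapp]
    exact Finset.sum_congr rfl fun k _ => by ring
  -- positivity
  have hpos : ∀ X : g, X ≠ 0 → 0 < B X X := by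
    intro X hX
    rw [hBapp]
    have hw : ∀ k : Fin 8, (0 : ℝ) < ((wIf k : ℤ) : ℝ) := by
      intro k
      have : (0 : ℤ) < wIf k := by revert k; decide
      exact_mod_cast this
    obtain ⟨k, hk⟩ : ∃ k, e.repr X k ≠ 0 := by
      by_contra hc
      push_neg at hc
      exact hX (by
        have : e.repr X = 0 := Finsupp.ext fun k => hc k
        simpa using congrArg e.repr.symm this)
    refine Finset.sum_pos' (fun m _ => ?_) ⟨k, Finset.mem_univ k, ?_⟩
    · rw [mul_assoc]
      exact mul_nonneg (le_of_lt (hw m)) (mul_self_nonneg _)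
    · rw [mul_assoc]
      exact mul_pos (hw k) (mul_self_pos.mpr hk)
  -- compatibility
  have hcompat : ∀ X Y : g, B (J X) (J Y) = B X Y := by
    set f : g → g → ℝ := fun X Y => B (J X) (J Y) - B X Y with hfdef
    have key : ∀ i j : Fin 8,
        jSf i * jSf j * (if jTf i = jTf j then wIf (jTf i) else 0)
          - (if i = j then wIf i else 0) = 0 := by decide
    have hb : ∀ i j, f (e i) (e j) = 0 := by
      intro i j
      have hk := congrArg (fun n : ℤ => (n : ℝ)) (key i j)
      push_cast [apply_ite (fun n : ℤ => (n : ℝ))] at hk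
      simp only [hfdef]
      rw [hJ i, hJ j, map_smul, map_smul, LinearMap.smul_apply, hB, hB, smul_eq_mul, smul_eq_mul]
      push_cast
      linear_combination hk
    have hb1 : ∀ i (Y : g), f (e i) Y = 0 := fun i =>
      lin1 e (f (e i))
        (fun a b => by simp only [hfdef, map_add]; ring)
        (fun r a => by simp only [hfdef, map_smul, smul_eq_mul]; ring)
        (hb i)
    intro X Y
    have := lin1 e (fun X' => f X' Y)
      (fun a b => by simp only [hfdef, map_add, LinearMap.add_apply]; ring)
      (fun r a => by
        simp only [hfdef, map_smul, LinearMap.smul_apply, smul_eq_mul]; ring)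
      (fun i => hb1 i Y) X
    simp only [hfdef] at this
    linarith [this]
  refine ⟨J, B, hJJ, hint, hsymm, hpos, hcompat, ?_⟩
  -- the Bismut torsion form
  set c : g → g → g → ℝ := bismutC (fun a b => B a b) J with hcdef
  have hcB : ∀ a b c', B ⁅J (e a), J (e b)⁆ (e c') = ((cBI a b c' : ℤ) : ℝ) := by
    intro a b c'
    rw [hJ a, hJ b, smul_lie, lie_smul, hlie]
    simp only [map_smul, LinearMap.smul_apply, smul_eq_mul, hB]
    simp only [cBI]
    push_cast [apply_ite (fun n : ℤ => (n : ℝ))]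
    split_ifs with h
    · rw [h]; ring
    · ring
  have hcb : ∀ a b c', c (e a) (e b) (e c') = ((cfI a b c' : ℤ) : ℝ) := by
    intro a b c'
    simp only [hcdef, bismutC, hcB]
    simp only [cfI]
    push_cast
    ring
  have hc1s : ∀ (r : ℝ) X Y Z, c (r • X) Y Z = r * c X Y Z := by
    intro r X Y Z
    simp only [hcdef, bismutC, map_smul, smul_lie, lie_smul, LinearMap.smul_apply, smul_eq_mul]
    ring
  -- dC c vanishes on basis vectors
  have hdcb : ∀ i j k l, dC c (e i) (e j) (e k) (e l) = 0 := by
    intro i j k l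
    have hk := congrArg (fun n : ℤ => (n : ℝ)) (FIzero i j k l)
    simp only [FI] at hk
    push_cast at hk
    rw [dC, hlie i j, hlie i k, hlie i l, hlie j k, hlie j l, hlie k l,
      hc1s, hc1s, hc1s, hc1s, hc1s, hc1s, hcb, hcb, hcb, hcb, hcb, hcb]
    linear_combination hk
  -- linearity of dC c in each slot
  have ha1 : ∀ (a b Y Z W : g), dC c (a + b) Y Z W = dC c a Y Z W + dC c b Y Z W := by
    intro a b Y Z W
    simp only [hcdef, dC, bismutC, add_lie, lie_add, map_add, LinearMap.add_apply]
    ring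
  have hs1 : ∀ (r : ℝ) (a Y Z W : g), dC c (r • a) Y Z W = r • dC c a Y Z W := by
    intro r a Y Z W
    simp only [hcdef, dC, bismutC, smul_lie, lie_smul, map_smul, LinearMap.smul_apply,
      smul_eq_mul]
    ring
  have ha2 : ∀ (X a b Z W : g), dC c X (a + b) Z W = dC c X a Z W + dC c X b Z W := by
    intro X a b Z W
    simp only [hcdef, dC, bismutC, add_lie, lie_add, map_add, LinearMap.add_apply]
    ring
  have hs2 : ∀ (r : ℝ) (X a Z W : g), dC c X (r • a) Z W = r • dC c X a Z W := by
    intro r X a Z W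
    simp only [hcdef, dC, bismutC, smul_lie, lie_smul, map_smul, LinearMap.smul_apply,
      smul_eq_mul]
    ring
  have ha3 : ∀ (X Y a b W : g), dC c X Y (a + b) W = dC c X Y a W + dC c X Y b W := by
    intro X Y a b W
    simp only [hcdef, dC, bismutC, add_lie, lie_add, map_add, LinearMap.add_apply]
    ring
  have hs3 : ∀ (r : ℝ) (X Y a W : g), dC c X Y (r • a) W = r • dC c X Y a W := by
    intro r X Y a W
    simp only [hcdef, dC, bismutC, smul_lie, lie_smul, map_smul, LinearMap.smul_apply,
      smul_eq_mul]
    ring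
  have ha4 : ∀ (X Y Z a b : g), dC c X Y Z (a + b) = dC c X Y Z a + dC c X Y Z b := by
    intro X Y Z a b
    simp only [hcdef, dC, bismutC, add_lie, lie_add, map_add, LinearMap.add_apply]
    ring
  have hs4 : ∀ (r : ℝ) (X Y Z a : g), dC c X Y Z (r • a) = r • dC c X Y Z a := by
    intro r X Y Z a
    simp only [hcdef, dC, bismutC, smul_lie, lie_smul, map_smul, LinearMap.smul_apply,
      smul_eq_mul]
    ring
  -- extend from the basis by multilinearity
  have h4 : ∀ i j k (w : g), dC c (e i) (e j) (e k) w = 0 := fun i j k =>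
    lin1 e (dC c (e i) (e j) (e k)) (ha4 _ _ _) (fun r a => hs4 r _ _ _ a) (hdcb i j k)
  have h3 : ∀ i j (z w : g), dC c (e i) (e j) z w = 0 := fun i j z w =>
    lin1 e (fun z' => dC c (e i) (e j) z' w) (fun a b => ha3 _ _ a b w)
      (fun r a => hs3 r _ _ a w) (fun k => h4 i j k w) z
  have h2 : ∀ i (y z w : g), dC c (e i) y z w = 0 := fun i y z w =>
    lin1 e (fun y' => dC c (e i) y' z w) (fun a b => ha2 _ a b z w)
      (fun r a => hs2 r _ a z w) (fun j => h3 i j z w) y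
  intro X Y Z W
  exact lin1 e (fun x' => dC c x' Y Z W) (fun a b => ha1 a b Y Z W)
    (fun r a => hs1 r a Y Z W) (fun i => h2 i Y Z W) X
end

section
/- Let h₅ be the 5-dimensional real Heisenberg Lie algebra with basis e₁,…,e₅ whose only nonzero brackets among basis elements are [e₁,e₂] = e₅ and [e₃,e₄] = e₅, and let g = h₅ ⊕ ℝ³ (direct sum with a 3-dimensional abelian Lie algebra). Then g admits no SKT structure: for every complex structure J on g and every J-compatible inner product on g, the Bismut torsion 3-form is not closed. -/
noncomputable def omegaB {g : Type*} [LieRing g] [LieAlgebra ℝ g]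
    (e : Module.Basis (Fin 8) ℝ g) : g →ₗ[ℝ] g →ₗ[ℝ] ℝ :=
  LinearMap.mk₂ ℝ (fun U V =>
      e.coord 0 U * e.coord 1 V - e.coord 1 U * e.coord 0 V
        + e.coord 2 U * e.coord 3 V - e.coord 3 U * e.coord 2 V)
    (by intros; simp only [map_add]; ring)
    (by intros; simp only [map_smul, smul_eq_mul]; ring)
    (by intros; simp only [map_add]; ring)
    (by intros; simp only [map_smul, smul_eq_mul]; ring)

noncomputable def brB {g : Type*} [LieRing g] [LieAlgebra ℝ g]
    (e : Module.Basis (Fin 8) ℝ g) : g →ₗ[ℝ] g →ₗ[ℝ] g :=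
  LinearMap.mk₂ ℝ (fun U V => omegaB e U V • e 4)
    (by intros; simp only [map_add, LinearMap.add_apply, add_smul])
    (by intros; simp only [map_smul, LinearMap.smul_apply, smul_eq_mul, smul_smul])
    (by intros; simp only [map_add, add_smul])
    (by intros; simp only [map_smul, smul_eq_mul, smul_smul])

theorem omegaB_basis {g : Type*} [LieRing g] [LieAlgebra ℝ g]
    (e : Module.Basis (Fin 8) ℝ g) (i j : Fin 8) :
    omegaB e (e i) (e j) =
      if i = 0 ∧ j = 1 then 1 else if i = 1 ∧ j = 0 then -1
        else if i = 2 ∧ j = 3 then 1 else if i = 3 ∧ j = 2 then -1 else 0 := by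
  simp only [omegaB, LinearMap.mk₂_apply, Module.Basis.coord_apply, Module.Basis.repr_self,
    Finsupp.single_apply]
  fin_cases i <;> fin_cases j <;> norm_num [Fin.ext_iff] <;>
    norm_num [show ((3:Fin 8):ℕ) = 3 from rfl]

theorem bracket_struct {g : Type*} [LieRing g] [LieAlgebra ℝ g]
    (e : Module.Basis (Fin 8) ℝ g)
    (h12 : ⁅e 0, e 1⁆ = e 4) (h34 : ⁅e 2, e 3⁆ = e 4)
    (hzero : ∀ i j : Fin 8,
      ¬ ((i = 0 ∧ j = 1) ∨ (i = 1 ∧ j = 0) ∨ (i = 2 ∧ j = 3) ∨ (i = 3 ∧ j = 2)) →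
      ⁅e i, e j⁆ = 0) (U V : g) :
    ⁅U, V⁆ = omegaB e U V • e 4 := by
  have h21 : ⁅e 1, e 0⁆ = -(e 4) := by rw [← lie_skew, h12]
  have h43 : ⁅e 3, e 2⁆ = -(e 4) := by rw [← lie_skew, h34]
  have key : (LieAlgebra.ad ℝ g : g →ₗ[ℝ] g →ₗ[ℝ] g) = brB e := by
    apply LinearMap.ext_basis e e
    intro i j
    show ⁅e i, e j⁆ = omegaB e (e i) (e j) • e 4
    rw [omegaB_basis]
    by_cases hc1 : i = 0 ∧ j = 1
    · obtain ⟨hi, hj⟩ := hc1; subst hi; subst hj; rw [if_pos ⟨rfl, rfl⟩, h12, one_smul]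
    by_cases hc2 : i = 1 ∧ j = 0
    · obtain ⟨hi, hj⟩ := hc2; subst hi; subst hj
      rw [if_neg hc1, if_pos ⟨rfl, rfl⟩, h21, neg_one_smul]
    by_cases hc3 : i = 2 ∧ j = 3
    · obtain ⟨hi, hj⟩ := hc3; subst hi; subst hj
      rw [if_neg hc1, if_neg hc2, if_pos ⟨rfl, rfl⟩, h34, one_smul]
    by_cases hc4 : i = 3 ∧ j = 2
    · obtain ⟨hi, hj⟩ := hc4; subst hi; subst hj
      rw [if_neg hc1, if_neg hc2, if_neg hc3, if_pos ⟨rfl, rfl⟩, h43, neg_one_smul]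
    rw [if_neg hc1, if_neg hc2, if_neg hc3, if_neg hc4, zero_smul,
      hzero i j (by tauto)]
  have h2 := LinearMap.congr_fun (LinearMap.congr_fun key U) V
  simpa [LieAlgebra.ad_apply, brB] using h2

theorem omegaB_e4_left {g : Type*} [LieRing g] [LieAlgebra ℝ g]
    (e : Module.Basis (Fin 8) ℝ g) (V : g) : omegaB e (e 4) V = 0 := by
  have h : ∀ k : Fin 8, k ≠ 4 → e.coord k (e 4) = 0 := by
    intro k hk
    simp [Module.Basis.coord_apply, Module.Basis.repr_self, Finsupp.single_apply, Ne.symm hk]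
  simp [omegaB, h 0 (by decide), h 1 (by decide), h 2 (by decide), h 3 (by decide)]

theorem omegaB_e4_right {g : Type*} [LieRing g] [LieAlgebra ℝ g]
    (e : Module.Basis (Fin 8) ℝ g) (V : g) : omegaB e V (e 4) = 0 := by
  have h : ∀ k : Fin 8, k ≠ 4 → e.coord k (e 4) = 0 := by
    intro k hk
    simp [Module.Basis.coord_apply, Module.Basis.repr_self, Finsupp.single_apply, Ne.symm hk]
  simp [omegaB, h 0 (by decide), h 1 (by decide), h 2 (by decide), h 3 (by decide)]

theorem indep_e4 {g : Type*} [LieRing g] [LieAlgebra ℝ g]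
    (e : Module.Basis (Fin 8) ℝ g) (J : g →ₗ[ℝ] g) (hJ2 : ∀ X : g, J (J X) = -X)
    (a b : ℝ) (h : a • e 4 + b • J (e 4) = 0) : a = 0 ∧ b = 0 := by
  have h2 : a • J (e 4) - b • e 4 = 0 := by
    have := congrArg J h
    simpa [map_add, map_smul, hJ2, smul_neg, sub_eq_add_neg] using this
  have h3 : (a ^ 2 + b ^ 2) • e 4 = 0 := by
    have := congrArg (fun x => a • x) h
    have h2' := congrArg (fun x => b • x) h2
    simp only [smul_add, smul_sub, smul_smul, smul_zero] at this h2'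
    have := congrArg₂ (fun x y => x - y) this h2'
    simp only [sub_zero] at this
    rw [← this]
    module
  have h4 : a ^ 2 + b ^ 2 = 0 := by
    by_contra hne
    exact Module.Basis.ne_zero e 4 (by
      have := congrArg (fun x => (a ^ 2 + b ^ 2)⁻¹ • x) h3
      simpa [smul_smul, inv_mul_cancel₀ hne] using this)
  constructor <;> nlinarith [sq_nonneg a, sq_nonneg b]

/-- the Lie algebra `h₅ ⊕ ℝ³` (basis `e₁,…,e₈`, i.e. `e 0, …, e 7` below,
with nonzero brackets `[e₁,e₂]=e₅` and `[e₃,e₄]=e₅`) admits no SKT structure: for every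
complex structure `J` and every `J`-compatible inner product, the Bismut torsion 3-form
is not closed. -/
theorem h5_plus_R3_admits_no_SKT
    {g : Type*} [LieRing g] [LieAlgebra ℝ g]
    (e : Module.Basis (Fin 8) ℝ g)
    (h12 : ⁅e 0, e 1⁆ = e 4)
    (h34 : ⁅e 2, e 3⁆ = e 4)
    (hzero : ∀ i j : Fin 8,
      ¬ ((i = 0 ∧ j = 1) ∨ (i = 1 ∧ j = 0) ∨ (i = 2 ∧ j = 3) ∨ (i = 3 ∧ j = 2)) →
      ⁅e i, e j⁆ = 0) :
    ∀ (J : g →ₗ[ℝ] g),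
      (∀ X : g, J (J X) = -X) →
      (∀ X Y : g, ⁅X, Y⁆ - ⁅J X, J Y⁆ + J ⁅J X, Y⁆ + J ⁅X, J Y⁆ = 0) →
      ∀ (B : g →ₗ[ℝ] g →ₗ[ℝ] ℝ),
        (∀ X Y : g, B X Y = B Y X) →
        (∀ X : g, X ≠ 0 → 0 < B X X) →
        (∀ X Y : g, B (J X) (J Y) = B X Y) →
        ∃ X Y Z W : g, dC (bismutC (fun a b => B a b) J) X Y Z W ≠ 0 := by
  intro J hJ2 hint B hsymm hpos hcomp
  have hbr : ∀ U V : g, ⁅U, V⁆ = omegaB e U V • e 4 := bracket_struct e h12 h34 hzero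
  -- J-invariance of omega
  have hJinv : ∀ U V : g, omegaB e (J U) (J V) = omegaB e U V := by
    intro U V
    have h := hint U V
    rw [hbr U V, hbr (J U) (J V), hbr (J U) V, hbr U (J V)] at h
    have h' : (omegaB e U V - omegaB e (J U) (J V)) • e 4
        + (omegaB e (J U) V + omegaB e U (J V)) • J (e 4) = 0 := by
      rw [← h]; simp only [map_smul, sub_smul, add_smul]; abel
    have := (indep_e4 e J hJ2 _ _ h').1
    linarith [this]
  -- the torsion 3-form at (e 4, A, B)
  have hc4 : ∀ A B' : g, bismutC (fun a b => B a b) J (e 4) A B'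
      = -(omegaB e A B') * B (e 4) (e 4) := by
    intro A B'
    have hb1 : ⁅J (e 4), J A⁆ = (0 : g) := by
      rw [hbr, hJinv, omegaB_e4_left, zero_smul]
    have hb3 : ⁅J B', J (e 4)⁆ = (0 : g) := by
      rw [hbr, hJinv, omegaB_e4_right, zero_smul]
    have hb2 : ⁅J A, J B'⁆ = omegaB e A B' • e 4 := by rw [hbr, hJinv]
    simp only [bismutC, hb1, hb2, hb3, map_zero, LinearMap.zero_apply, map_smul,
      LinearMap.smul_apply, smul_eq_mul]
    ring
  -- the torsion 3-form with first argument 0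
  have hc0 : ∀ A B' : g, bismutC (fun a b => B a b) J 0 A B' = 0 := by
    intro A B'
    simp [bismutC]
  refine ⟨e 0, e 1, e 2, e 3, ?_⟩
  have hz02 : ⁅e 0, e 2⁆ = (0 : g) := hzero 0 2 (by decide)
  have hz03 : ⁅e 0, e 3⁆ = (0 : g) := hzero 0 3 (by decide)
  have hz12 : ⁅e 1, e 2⁆ = (0 : g) := hzero 1 2 (by decide)
  have hz13 : ⁅e 1, e 3⁆ = (0 : g) := hzero 1 3 (by decide)
  have hω01 : omegaB e (e 0) (e 1) = 1 := by rw [omegaB_basis]; norm_num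
  have hω23 : omegaB e (e 2) (e 3) = 1 := by
    rw [omegaB_basis, if_neg (by decide), if_neg (by decide), if_pos ⟨rfl, rfl⟩]
  have hBpos : 0 < B (e 4) (e 4) := hpos (e 4) (Module.Basis.ne_zero e 4)
  rw [dC, h12, h34, hz02, hz03, hz12, hz13, hc0, hc0, hc0, hc0, hc4, hc4, hω01, hω23]
  intro habs
  nlinarith [hBpos]
end

section
/- Fix complex numbers B₁,B₄,B₅,C₃,C₄,F₁,F₄,F₅,G₃,G₄. Let g be the 8-dimensional real Lie algebra whose complexification has basis Z₁,Z₂,Z₃,Z₄,Z̄₁,Z̄₂,Z̄₃,Z̄₄ (with conjugation exchanging Z_j and Z̄_j) and whose only nonzero brackets, up to antisymmetry and conjugation, are [Z₁,Z₂] = −B₁Z₃ − F₁Z₄, [Z₁,Z̄₁] = −B₄Z₃ − F₄Z₄ + B̄₄Z̄₃ + F̄₄Z̄₄, [Z₁,Z̄₂] = −B₅Z₃ − F₅Z₄ + C̄₃Z̄₃ + Ḡ₃Z̄₄, [Z₂,Z̄₁] = −C₃Z₃ − G₃Z₄ + B̄₅Z̄₃ + F̄₅Z̄₄, [Z₂,Z̄₂]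 = −C₄Z₃ − G₄Z₄ + C̄₄Z̄₃ + Ḡ₄Z̄₄ (these define a 2-step nilpotent real Lie algebra, with integrable complex structure J acting as multiplication by i, i.e. JZ_j = iZ_j). Let ⟨·,·⟩ be the J-compatible inner product on g for which {Z₁,Z₂,Z₃,Z₄} is a unitary basis. Then (J,⟨·,·⟩) is SKT (its Bismut torsion 3-form is closed) if and only if |B₁|² + |F₁|² + |G₃|² + |B₅|² + |C₃|² + |F₅|² = 2 Re( C₄ B̄₄ + F₄ Ḡ₄ ). -/
set_option maxHeartbeats 64000000 in
open Complex in
/-- STATEMENT 17 (first family of 8-dimensional SKT nilpotent Lie algebras), formulated on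
the complexification: `g` is the complexified Lie algebra with basis
`Z₁,…,Z₄` (`Z (Sum.inl j)`) and `Z̄₁,…,Z̄₄` (`Z (Sum.inr j)`), whose only nonzero brackets
(up to antisymmetry and conjugation) are the ones listed; `J` is the (ℂ-linear extension of
the) complex structure acting as `i` on the `Zⱼ` and `−i` on the `Z̄ⱼ`, and `B` is the
ℂ-bilinear extension of the `J`-compatible inner product making `{Z₁,…,Z₄}` a unitary basis.
Then `(J, B)` is SKT (its Bismut torsion 3-form is closed) iff
`|B₁|² + |F₁|² + |G₃|² + |B₅|² + |C₃|² + |F₅|² = 2 Re(C₄ B̄₄ + F₄ Ḡ₄)`. -/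
theorem first_family_SKT_iff
    (B₁ B₄ B₅ C₃ C₄ F₁ F₄ F₅ G₃ G₄ : ℂ)
    {g : Type*} [LieRing g] [LieAlgebra ℂ g]
    (Z : Module.Basis (Fin 4 ⊕ Fin 4) ℂ g)
    (hb12 : ⁅Z (Sum.inl 0), Z (Sum.inl 1)⁆ =
      -B₁ • Z (Sum.inl 2) - F₁ • Z (Sum.inl 3))
    (hb12conj : ⁅Z (Sum.inr 0), Z (Sum.inr 1)⁆ =
      -(starRingEnd ℂ B₁) • Z (Sum.inr 2) - (starRingEnd ℂ F₁) • Z (Sum.inr 3))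
    (hb11bar : ⁅Z (Sum.inl 0), Z (Sum.inr 0)⁆ =
      -B₄ • Z (Sum.inl 2) - F₄ • Z (Sum.inl 3) +
        (starRingEnd ℂ B₄) • Z (Sum.inr 2) + (starRingEnd ℂ F₄) • Z (Sum.inr 3))
    (hb12bar : ⁅Z (Sum.inl 0), Z (Sum.inr 1)⁆ =
      -B₅ • Z (Sum.inl 2) - F₅ • Z (Sum.inl 3) +
        (starRingEnd ℂ C₃) • Z (Sum.inr 2) + (starRingEnd ℂ G₃) • Z (Sum.inr 3))
    (hb21bar : ⁅Z (Sum.inl 1), Z (Sum.inr 0)⁆ =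
      -C₃ • Z (Sum.inl 2) - G₃ • Z (Sum.inl 3) +
        (starRingEnd ℂ B₅) • Z (Sum.inr 2) + (starRingEnd ℂ F₅) • Z (Sum.inr 3))
    (hb22bar : ⁅Z (Sum.inl 1), Z (Sum.inr 1)⁆ =
      -C₄ • Z (Sum.inl 2) - G₄ • Z (Sum.inl 3) +
        (starRingEnd ℂ C₄) • Z (Sum.inr 2) + (starRingEnd ℂ G₄) • Z (Sum.inr 3))
    (hcentral : ∀ a : Fin 4 ⊕ Fin 4,
      ⁅Z (Sum.inl 2), Z a⁆ = 0 ∧ ⁅Z (Sum.inl 3), Z a⁆ = 0 ∧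
      ⁅Z (Sum.inr 2), Z a⁆ = 0 ∧ ⁅Z (Sum.inr 3), Z a⁆ = 0)
    (J : g →ₗ[ℂ] g)
    (hJ : ∀ j : Fin 4, J (Z (Sum.inl j)) = Complex.I • Z (Sum.inl j))
    (hJbar : ∀ j : Fin 4, J (Z (Sum.inr j)) = -(Complex.I • Z (Sum.inr j)))
    (B : g →ₗ[ℂ] g →ₗ[ℂ] ℂ)
    (hBsymm : ∀ X Y : g, B X Y = B Y X)
    (hBunitary : ∀ j k : Fin 4,
      B (Z (Sum.inl j)) (Z (Sum.inr k)) = if j = k then (1 / 2 : ℂ) else 0)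
    (hBhol : ∀ j k : Fin 4, B (Z (Sum.inl j)) (Z (Sum.inl k)) = 0)
    (hBantihol : ∀ j k : Fin 4, B (Z (Sum.inr j)) (Z (Sum.inr k)) = 0) :
    (∀ X Y Z' W : g, dC (bismutC (fun a b => B a b) J) X Y Z' W = 0) ↔
      ‖B₁‖ ^ 2 + ‖F₁‖ ^ 2 + ‖G₃‖ ^ 2 +
          ‖B₅‖ ^ 2 + ‖C₃‖ ^ 2 + ‖F₅‖ ^ 2 =
        2 * (C₄ * starRingEnd ℂ B₄ + F₄ * starRingEnd ℂ G₄).re := by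
    classical
  have fin4 : ∀ i : Fin 4, i = 0 ∨ i = 1 ∨ i = 2 ∨ i = 3 := by decide
  -- basic centrality facts
  have hcA : ∀ a, ⁅Z (Sum.inl 2), Z a⁆ = 0 := fun a => (hcentral a).1
  have hcB : ∀ a, ⁅Z (Sum.inl 3), Z a⁆ = 0 := fun a => (hcentral a).2.1
  have hcC : ∀ a, ⁅Z (Sum.inr 2), Z a⁆ = 0 := fun a => (hcentral a).2.2.1
  have hcD : ∀ a, ⁅Z (Sum.inr 3), Z a⁆ = 0 := fun a => (hcentral a).2.2.2
  have adz : ∀ i : Fin 4 ⊕ Fin 4, (∀ a, ⁅Z i, Z a⁆ = 0) → ∀ w : g, ⁅Z i, w⁆ = 0 := by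
    intro i hi w
    have h0 : (LieAlgebra.ad ℂ g (Z i) : g →ₗ[ℂ] g) = 0 :=
      Z.ext fun a => by simpa [LieAlgebra.ad_apply] using hi a
    simpa [LieAlgebra.ad_apply] using LinearMap.congr_fun h0 w
  have hcA' := adz _ hcA
  have hcB' := adz _ hcB
  have hcC' := adz _ hcC
  have hcD' := adz _ hcD
  set Csp : Submodule ℂ g := Submodule.span ℂ
    ({Z (Sum.inl 2), Z (Sum.inl 3), Z (Sum.inr 2), Z (Sum.inr 3)} : Set g) with hCsp
  have mA : Z (Sum.inl 2) ∈ Csp := Submodule.subset_span (by simp)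
  have mB : Z (Sum.inl 3) ∈ Csp := Submodule.subset_span (by simp)
  have mC : Z (Sum.inr 2) ∈ Csp := Submodule.subset_span (by simp)
  have mD : Z (Sum.inr 3) ∈ Csp := Submodule.subset_span (by simp)
  have memC : ∀ a b c d : ℂ,
      a • Z (Sum.inl 2) + b • Z (Sum.inl 3) + c • Z (Sum.inr 2) + d • Z (Sum.inr 3) ∈ Csp :=
    fun a b c d => Submodule.add_mem _ (Submodule.add_mem _ (Submodule.add_mem _
      (Submodule.smul_mem _ _ mA) (Submodule.smul_mem _ _ mB))
      (Submodule.smul_mem _ _ mC)) (Submodule.smul_mem _ _ mD)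
  have hCz : ∀ x ∈ Csp, ∀ w : g, ⁅x, w⁆ = 0 := by
    intro x hx
    induction hx using Submodule.span_induction with
    | mem x hx =>
      rcases hx with h | h | h | h <;> subst h <;>
        first
          | exact hcA' | exact hcB' | exact hcC' | exact hcD'
    | zero => intro w; simp
    | add x y hx hy ihx ihy => intro w; rw [add_lie, ihx w, ihy w, add_zero]
    | smul a x hx ihx => intro w; rw [smul_lie, ihx w, smul_zero]
  have hCzR : ∀ x ∈ Csp, ∀ w : g, ⁅w, x⁆ = 0 := fun x hx w => by
    rw [← lie_skew, hCz x hx w, neg_zero]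
  have hJC : ∀ x ∈ Csp, J x ∈ Csp := by
    intro x hx
    induction hx using Submodule.span_induction with
    | mem x hx =>
      rcases hx with h | h | h | h <;> subst h <;>
        simp only [hJ, hJbar] <;>
        first
          | exact Submodule.smul_mem _ _ mA
          | exact Submodule.smul_mem _ _ mB
          | exact Submodule.neg_mem _ (Submodule.smul_mem _ _ mC)
          | exact Submodule.neg_mem _ (Submodule.smul_mem _ _ mD)
    | zero => simp
    | add x y hx hy ihx ihy => rw [map_add]; exact Submodule.add_mem _ ihx ihy
    | smul a x hx ihx => rw [map_smul]; exact Submodule.smul_mem _ _ ihx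
  -- all brackets of basis vectors land in the centre
  have hspan : ∀ i j : Fin 4 ⊕ Fin 4, ⁅Z i, Z j⁆ ∈ Csp := by
    intro i j
    rcases i with i | i <;> rcases j with j | j <;>
      rcases fin4 i with rfl | rfl | rfl | rfl <;> rcases fin4 j with rfl | rfl | rfl | rfl <;>
      first
        | (rw [lie_self]; exact Submodule.zero_mem _)
        | (rw [hcA]; exact Submodule.zero_mem _)
        | (rw [hcB]; exact Submodule.zero_mem _)
        | (rw [hcC]; exact Submodule.zero_mem _)
        | (rw [hcD]; exact Submodule.zero_mem _)
        | (rw [← lie_skew]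
           first
             | (rw [hcA]; simpa using Submodule.zero_mem _)
             | (rw [hcB]; simpa using Submodule.zero_mem _)
             | (rw [hcC]; simpa using Submodule.zero_mem _)
             | (rw [hcD]; simpa using Submodule.zero_mem _)
             | (refine Submodule.neg_mem _ ?_
                first
                  | (rw [hb12]; convert memC (-B₁) (-F₁) 0 0 using 1; module)
                  | (rw [hb12conj]; convert memC 0 0 (-(starRingEnd ℂ B₁)) (-(starRingEnd ℂ F₁)) using 1; module)
                  | (rw [hb11bar]; convert memC (-B₄) (-F₄) (starRingEnd ℂ B₄) (starRingEnd ℂ F₄) using 1; module)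
                  | (rw [hb12bar]; convert memC (-B₅) (-F₅) (starRingEnd ℂ C₃) (starRingEnd ℂ G₃) using 1; module)
                  | (rw [hb21bar]; convert memC (-C₃) (-G₃) (starRingEnd ℂ B₅) (starRingEnd ℂ F₅) using 1; module)
                  | (rw [hb22bar]; convert memC (-C₄) (-G₄) (starRingEnd ℂ C₄) (starRingEnd ℂ G₄) using 1; module)))
        | (rw [hb12]; convert memC (-B₁) (-F₁) 0 0 using 1; module)
        | (rw [hb12conj]; convert memC 0 0 (-(starRingEnd ℂ B₁)) (-(starRingEnd ℂ F₁)) using 1; module)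
        | (rw [hb11bar]; convert memC (-B₄) (-F₄) (starRingEnd ℂ B₄) (starRingEnd ℂ F₄) using 1; module)
        | (rw [hb12bar]; convert memC (-B₅) (-F₅) (starRingEnd ℂ C₃) (starRingEnd ℂ G₃) using 1; module)
        | (rw [hb21bar]; convert memC (-C₃) (-G₃) (starRingEnd ℂ B₅) (starRingEnd ℂ F₅) using 1; module)
        | (rw [hb22bar]; convert memC (-C₄) (-G₄) (starRingEnd ℂ C₄) (starRingEnd ℂ G₄) using 1; module)
  have hbrC : ∀ u v : g, ⁅u, v⁆ ∈ Csp := by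
    have hmem : ∀ x : g, x ∈ Submodule.span ℂ (Set.range Z) := by
      intro x; rw [Z.span_eq]; exact Submodule.mem_top
    intro u v
    induction hmem u using Submodule.span_induction with
    | mem x hx =>
      obtain ⟨i, rfl⟩ := hx
      induction hmem v using Submodule.span_induction with
      | mem y hy => obtain ⟨j, rfl⟩ := hy; exact hspan i j
      | zero => simp
      | add x y hx hy ihx ihy => rw [lie_add]; exact Submodule.add_mem _ ihx ihy
      | smul a x hx ihx => rw [lie_smul]; exact Submodule.smul_mem _ _ ihx
    | zero => simp
    | add x y hx hy ihx ihy => rw [add_lie]; exact Submodule.add_mem _ ihx ihy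
    | smul a x hx ihx => rw [smul_lie]; exact Submodule.smul_mem _ _ ihx
  have hJb1 : ∀ u v w : g, ⁅J ⁅u, v⁆, w⁆ = 0 := fun u v w =>
    hCz _ (hJC _ (hbrC u v)) w
  have hJb2 : ∀ u v w : g, ⁅w, J ⁅u, v⁆⁆ = 0 := fun u v w =>
    hCzR _ (hJC _ (hbrC u v)) w
  -- the quadrilinear map
  obtain ⟨Φ, hΦ⟩ : ∃ Φ : g →ₗ[ℂ] g →ₗ[ℂ] g →ₗ[ℂ] g →ₗ[ℂ] ℂ,
      ∀ X Y Z' W : g, Φ X Y Z' W =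
        B ⁅J Z', J W⁆ ⁅X, Y⁆ - B ⁅J Y, J W⁆ ⁅X, Z'⁆ + B ⁅J Y, J Z'⁆ ⁅X, W⁆
          + B ⁅J X, J W⁆ ⁅Y, Z'⁆ - B ⁅J X, J Z'⁆ ⁅Y, W⁆ + B ⁅J X, J Y⁆ ⁅Z', W⁆ := by
    refine ⟨LinearMap.mk₂ ℂ (fun X Y => LinearMap.mk₂ ℂ (fun Z' W =>
        B ⁅J Z', J W⁆ ⁅X, Y⁆ - B ⁅J Y, J W⁆ ⁅X, Z'⁆ + B ⁅J Y, J Z'⁆ ⁅X, W⁆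
          + B ⁅J X, J W⁆ ⁅Y, Z'⁆ - B ⁅J X, J Z'⁆ ⁅Y, W⁆ + B ⁅J X, J Y⁆ ⁅Z', W⁆)
      (by intros; simp [map_add, add_lie, lie_add, LinearMap.add_apply]; ring)
      (by intros; simp [map_smul, smul_lie, lie_smul, LinearMap.smul_apply, smul_eq_mul]; ring)
      (by intros; simp [map_add, add_lie, lie_add, LinearMap.add_apply]; ring)
      (by intros; simp [map_smul, smul_lie, lie_smul, LinearMap.smul_apply, smul_eq_mul]; ring))
      ?_ ?_ ?_ ?_, fun X Y Z' W => rfl⟩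
    · intro m₁ m₂ n; ext z w
      simp [map_add, add_lie, lie_add, LinearMap.add_apply]; ring
    · intro c m n; ext z w
      simp [map_smul, smul_lie, lie_smul, LinearMap.smul_apply, smul_eq_mul]; ring
    · intro m n₁ n₂; ext z w
      simp [map_add, add_lie, lie_add, LinearMap.add_apply]; ring
    · intro c m n; ext z w
      simp [map_smul, smul_lie, lie_smul, LinearMap.smul_apply, smul_eq_mul]; ring
  have hform : ∀ X Y Z' W : g,
      dC (bismutC (fun a b => B a b) J) X Y Z' W = Φ X Y Z' W := by
    intro X Y Z' W
    rw [hΦ]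
    simp only [dC, bismutC, hJb1, hJb2, map_zero, LinearMap.zero_apply]
    ring
  -- degenerate vanishing
  have kill : ∀ x y z w : g,
      (x ∈ Csp ∨ y ∈ Csp ∨ z ∈ Csp ∨ w ∈ Csp) → Φ x y z w = 0 := by
    intro x y z w hmem
    rw [hΦ]
    rcases hmem with hx | hx | hx | hx <;>
      simp [hCz _ hx, hCzR _ hx, hCz _ (hJC _ hx), hCzR _ (hJC _ hx), map_zero,
        LinearMap.zero_apply]
  have hZmem : ∀ i : Fin 4 ⊕ Fin 4, Z i ∈ Csp ∨
      i = Sum.inl 0 ∨ i = Sum.inl 1 ∨ i = Sum.inr 0 ∨ i = Sum.inr 1 := by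
    intro i
    rcases i with i | i <;> rcases fin4 i with rfl | rfl | rfl | rfl <;>
      first
        | exact Or.inl mA | exact Or.inl mB | exact Or.inl mC | exact Or.inl mD
        | (right; simp)
  -- bracket table
  have t10 : ⁅Z (Sum.inl 1), Z (Sum.inl 0)⁆ =
      -(-B₁ • Z (Sum.inl 2) - F₁ • Z (Sum.inl 3)) := by rw [← lie_skew, hb12]
  have t32 : ⁅Z (Sum.inr 1), Z (Sum.inr 0)⁆ =
      -(-(starRingEnd ℂ B₁) • Z (Sum.inr 2) - (starRingEnd ℂ F₁) • Z (Sum.inr 3)) := by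
    rw [← lie_skew, hb12conj]
  have t20 : ⁅Z (Sum.inr 0), Z (Sum.inl 0)⁆ =
      -(-B₄ • Z (Sum.inl 2) - F₄ • Z (Sum.inl 3) +
        (starRingEnd ℂ B₄) • Z (Sum.inr 2) + (starRingEnd ℂ F₄) • Z (Sum.inr 3)) := by
    rw [← lie_skew, hb11bar]
  have t30 : ⁅Z (Sum.inr 1), Z (Sum.inl 0)⁆ =
      -(-B₅ • Z (Sum.inl 2) - F₅ • Z (Sum.inl 3) +
        (starRingEnd ℂ C₃) • Z (Sum.inr 2) + (starRingEnd ℂ G₃) • Z (Sum.inr 3)) := by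
    rw [← lie_skew, hb12bar]
  have t21 : ⁅Z (Sum.inr 0), Z (Sum.inl 1)⁆ =
      -(-C₃ • Z (Sum.inl 2) - G₃ • Z (Sum.inl 3) +
        (starRingEnd ℂ B₅) • Z (Sum.inr 2) + (starRingEnd ℂ F₅) • Z (Sum.inr 3)) := by
    rw [← lie_skew, hb21bar]
  have t31 : ⁅Z (Sum.inr 1), Z (Sum.inl 1)⁆ =
      -(-C₄ • Z (Sum.inl 2) - G₄ • Z (Sum.inl 3) +
        (starRingEnd ℂ C₄) • Z (Sum.inr 2) + (starRingEnd ℂ G₄) • Z (Sum.inr 3)) := by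
    rw [← lie_skew, hb22bar]
  have hBunitary' : ∀ j k : Fin 4,
      B (Z (Sum.inr j)) (Z (Sum.inl k)) = if k = j then (1 / 2 : ℂ) else 0 := by
    intro j k; rw [hBsymm]; exact hBunitary k j
  constructor
  · intro h
    have h0 := h (Z (Sum.inl 0)) (Z (Sum.inl 1)) (Z (Sum.inr 0)) (Sum.inr 1 |> Z)
    rw [hform, hΦ] at h0
    simp only [hJ, hJbar, hb12, hb12conj, hb11bar, hb12bar, hb21bar, hb22bar,
      neg_lie, lie_neg, smul_lie, lie_smul, smul_neg, neg_neg, smul_smul,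
      Complex.I_mul_I, neg_smul, one_smul, map_add, map_sub, map_neg, map_smul,
      LinearMap.add_apply, LinearMap.sub_apply, LinearMap.neg_apply, LinearMap.smul_apply,
      hBunitary, hBunitary', hBhol, hBantihol, smul_eq_mul, Fin.reduceEq, reduceIte,
      if_true, if_false] at h0
    have hkeyC : B₁ * starRingEnd ℂ B₁ + F₁ * starRingEnd ℂ F₁ + G₃ * starRingEnd ℂ G₃ +
        B₅ * starRingEnd ℂ B₅ + C₃ * starRingEnd ℂ C₃ + F₅ * starRingEnd ℂ F₅ =
        C₄ * starRingEnd ℂ B₄ + starRingEnd ℂ C₄ * B₄ +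
          F₄ * starRingEnd ℂ G₄ + starRingEnd ℂ F₄ * G₄ := by
      first
        | linear_combination h0
        | linear_combination -h0
        | linear_combination 2 * h0
        | linear_combination -2 * h0
        | linear_combination h0 / 2
        | linear_combination -h0 / 2
    have hre := congrArg Complex.re hkeyC
    simp only [Complex.add_re, Complex.mul_re, Complex.conj_re, Complex.conj_im] at hre
    simp only [Complex.sq_norm, Complex.normSq_apply, Complex.add_re, Complex.mul_re,
      Complex.conj_re, Complex.conj_im]
    linarith [hre]
  · intro hEq X Y Z' W
    have hkeyC : B₁ * starRingEnd ℂ B₁ + F₁ * starRingEnd ℂ F₁ + G₃ * starRingEnd ℂ G₃ +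
        B₅ * starRingEnd ℂ B₅ + C₃ * starRingEnd ℂ C₃ + F₅ * starRingEnd ℂ F₅ =
        C₄ * starRingEnd ℂ B₄ + starRingEnd ℂ C₄ * B₄ +
          F₄ * starRingEnd ℂ G₄ + starRingEnd ℂ F₄ * G₄ := by
      apply Complex.ext
      · simp only [Complex.sq_norm, Complex.normSq_apply, Complex.add_re, Complex.mul_re,
          Complex.conj_re, Complex.conj_im] at hEq ⊢
        linarith [hEq]
      · simp only [Complex.add_im, Complex.mul_im, Complex.conj_re, Complex.conj_im]
        ring
    have key : ∀ i j k l : Fin 4 ⊕ Fin 4, Φ (Z i) (Z j) (Z k) (Z l) = 0 := by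
      intro i j k l
      rcases hZmem i with hx | hi
      · exact kill _ _ _ _ (Or.inl hx)
      rcases hZmem j with hx | hj
      · exact kill _ _ _ _ (Or.inr (Or.inl hx))
      rcases hZmem k with hx | hk
      · exact kill _ _ _ _ (Or.inr (Or.inr (Or.inl hx)))
      rcases hZmem l with hx | hl
      · exact kill _ _ _ _ (Or.inr (Or.inr (Or.inr hx)))
      rcases hi with rfl | rfl | rfl | rfl <;>
        rcases hj with rfl | rfl | rfl | rfl <;>
          rcases hk with rfl | rfl | rfl | rfl <;>
            rcases hl with rfl | rfl | rfl | rfl <;>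
              rw [hΦ] <;>
              simp only [hJ, hJbar, lie_self, hb12, hb12conj, hb11bar, hb12bar, hb21bar,
                hb22bar, t10, t32, t20, t30, t21, t31,
                neg_lie, lie_neg, smul_lie, lie_smul, smul_neg, neg_neg, smul_smul,
                Complex.I_mul_I, neg_smul, one_smul, map_add, map_sub, map_neg, map_smul,
                map_zero, LinearMap.zero_apply,
                LinearMap.add_apply, LinearMap.sub_apply, LinearMap.neg_apply,
                LinearMap.smul_apply, hBunitary, hBunitary', hBhol, hBantihol,
                smul_eq_mul, Fin.reduceEq, reduceIte, if_true, if_false] <;>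
              first
                | ring1
                | linear_combination hkeyC
                | linear_combination -hkeyC
                | linear_combination 2 * hkeyC
                | linear_combination -2 * hkeyC
                | linear_combination hkeyC / 2
                | linear_combination -hkeyC / 2
    have L3 : ∀ i j k, Φ (Z i) (Z j) (Z k) = 0 := fun i j k =>
      Z.ext fun l => by simpa using key i j k l
    have L2 : ∀ i j, Φ (Z i) (Z j) = 0 := fun i j =>
      Z.ext fun k => by simpa using L3 i j k
    have L1 : ∀ i, Φ (Z i) = 0 := fun i =>
      Z.ext fun j => by simpa using L2 i j
    have L0 : Φ = 0 := Z.ext fun i => by simpa using L1 i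
    rw [hform, L0]
    simp
end
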